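/- arXiv:0906.3196 — 11 statements merged into one kernel-verified Lean document; each statement's English description precedes it below -/
import Mathlib

section
/- Let A be a Hermitian n₁×n₁ complex matrix, C a Hermitian n₂×n₂ complex matrix such that both C and 1 − C are positive definite, B an n₁×n₂ complex matrix, and Q = fromBlocks A B Bᴴ C. Then Q and 1 − Q are both positive semidefinite if and only if B C⁻¹ Bᴴ ≤ A and B (1 − C)⁻¹ Bᴴ ≤ 1 − A. -/
open Matrix
open scoped ComplexOrder

/-- For `Q = fromBlocks A B Bᴴ C` with `A` Hermitian and `C`, `1 - C` positive definite,
`Q` and `1 - Q` are positive semidefinite iff `B C⁻¹ Bᴴ ≤ A` and `B (1 - C)⁻¹ Bᴴ ≤ 1 - A`. -/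
theorem stmt_1 {n₁ n₂ : ℕ}
    (A : Matrix (Fin n₁) (Fin n₁) ℂ) (C : Matrix (Fin n₂) (Fin n₂) ℂ)
    (B : Matrix (Fin n₁) (Fin n₂) ℂ)
    (hA : A.IsHermitian) (hC : C.PosDef) (hC' : (1 - C).PosDef)
    (Q : Matrix (Fin n₁ ⊕ Fin n₂) (Fin n₁ ⊕ Fin n₂) ℂ)
    (hQ : Q = fromBlocks A B Bᴴ C) :
    (Q.PosSemidef ∧ (1 - Q).PosSemidef) ↔
      ((A - B * C⁻¹ * Bᴴ).PosSemidef ∧ ((1 - A) - B * (1 - C)⁻¹ * Bᴴ).PosSemidef) := by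
  subst hQ
  have h1 : (1 : Matrix (Fin n₁ ⊕ Fin n₂) (Fin n₁ ⊕ Fin n₂) ℂ) - fromBlocks A B Bᴴ C
      = fromBlocks (1 - A) (-B) (-B)ᴴ (1 - C) := by
    ext (i|i) (j|j) <;> simp [fromBlocks, one_apply]
  have := hC.isUnit.invertible
  have := hC'.isUnit.invertible
  rw [h1, PosDef.fromBlocks₂₂ _ _ hC, PosDef.fromBlocks₂₂ _ _ hC']
  simp [Matrix.neg_mul, Matrix.mul_neg]
end

section
/- Let A be a Hermitian n₁×n₁ complex matrix, C a Hermitian n₂×n₂ complex matrix, B an n₁×n₂ complex matrix, and Q = fromBlocks A B Bᴴ C. Then Q and 1 − Q are both positive semidefinite if and only if 0 ≤ A ≤ 1, 0 ≤ C ≤ 1, and there exist n₁×n₂ complex matrices D₁ and D₂, each of operator norm at most 1, such that B = A^{1/2} D₁ C^{1/2} and B = (1 − A)^{1/2} D₂ (1 − C)^{1/2}, where A^{1/2}, C^{1/2}, (1 − A)^{1/2}, (1 − C)^{1/2} are the positive semidefinite square roots. -/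
open Matrix
open scoped ComplexOrder
open scoped Matrix.Norms.L2Operator
open scoped MatrixOrder

section Helpers

variable {m n : Type*} [Fintype m] [Fintype n]

noncomputable def Matrix.PosSemidef.sqrt {k : Type*} [Fintype k] [DecidableEq k]
    {M : Matrix k k ℂ} (_ : M.PosSemidef) : Matrix k k ℂ := CFC.sqrt M

lemma Matrix.PosSemidef.posSemidef_sqrt {k : Type*} [Fintype k] [DecidableEq k]
    {M : Matrix k k ℂ} (hM : M.PosSemidef) : hM.sqrt.PosSemidef :=
  nonneg_iff_posSemidef.mp (CFC.sqrt_nonneg M)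

lemma Matrix.PosSemidef.sqrt_mul_self {k : Type*} [Fintype k] [DecidableEq k]
    {M : Matrix k k ℂ} (hM : M.PosSemidef) : hM.sqrt * hM.sqrt = M :=
  CFC.sqrt_mul_sqrt_self M hM.nonneg

lemma dot_self_eq_normsq (x : n → ℂ) :
    star x ⬝ᵥ x = ((‖((WithLp.equiv 2 _).symm x : EuclideanSpace ℂ n)‖ : ℂ) ^ 2) := by
  rw [dotProduct_comm, ← EuclideanSpace.inner_toLp_toLp, inner_self_eq_norm_sq_to_K]
  norm_num

lemma dot_conjTranspose_mul (M : Matrix m n ℂ) (x : n → ℂ) :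
    star x ⬝ᵥ (Mᴴ * M) *ᵥ x
      = ((‖((WithLp.equiv 2 _).symm (M *ᵥ x) : EuclideanSpace ℂ m)‖ : ℂ) ^ 2) := by
  rw [← mulVec_mulVec, ← dot_self_eq_normsq (M *ᵥ x)]
  rw [Matrix.dotProduct_mulVec, Matrix.star_mulVec]

lemma contraction_iff [DecidableEq n] (D : Matrix m n ℂ) :
    ‖D‖ ≤ 1 ↔ (1 - Dᴴ * D).PosSemidef := by
  have expand : ∀ x : n → ℂ, star x ⬝ᵥ (1 - Dᴴ * D) *ᵥ x
      = ((‖((WithLp.equiv 2 _).symm x : EuclideanSpace ℂ n)‖ ^ 2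
        - ‖((WithLp.equiv 2 _).symm (D *ᵥ x) : EuclideanSpace ℂ m)‖ ^ 2 : ℝ) : ℂ) := by
    intro x
    rw [sub_mulVec, dotProduct_sub, one_mulVec, dot_self_eq_normsq x,
      dot_conjTranspose_mul D x]
    push_cast
    ring
  constructor
  · intro hD
    refine posSemidef_iff_dotProduct_mulVec.mpr ⟨?_, ?_⟩
    · simp [Matrix.IsHermitian, conjTranspose_sub, conjTranspose_mul]
    · intro x
      rw [expand x, Complex.zero_le_real, sub_nonneg]
      have h1 : ‖((WithLp.equiv 2 _).symm (D *ᵥ x) : EuclideanSpace ℂ m)‖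
          ≤ ‖D‖ * ‖((WithLp.equiv 2 _).symm x : EuclideanSpace ℂ n)‖ :=
        D.l2_opNorm_mulVec ((WithLp.equiv 2 _).symm x)
      have h2 : ‖D‖ * ‖((WithLp.equiv 2 _).symm x : EuclideanSpace ℂ n)‖
          ≤ ‖((WithLp.equiv 2 _).symm x : EuclideanSpace ℂ n)‖ := by
        nlinarith [norm_nonneg ((WithLp.equiv 2 (n → ℂ)).symm x : EuclideanSpace ℂ n)]
      exact pow_le_pow_left₀ (norm_nonneg _) (h1.trans h2) 2
  · intro h
    rw [l2_opNorm_def]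
    apply ContinuousLinearMap.opNorm_le_bound _ zero_le_one
    intro x
    rw [one_mul]
    have hx := h.dotProduct_mulVec_nonneg (WithLp.equiv 2 _ x)
    rw [expand _, Complex.zero_le_real, sub_nonneg] at hx
    have hx' : ‖((WithLp.equiv 2 _).symm (D *ᵥ (WithLp.equiv 2 _ x)) : EuclideanSpace ℂ m)‖
        ≤ ‖((WithLp.equiv 2 _).symm (WithLp.equiv 2 _ x) : EuclideanSpace ℂ n)‖ := by
      have h0 : (0:ℝ) ≤ ‖((WithLp.equiv 2 _).symm (WithLp.equiv 2 _ x) : EuclideanSpace ℂ n)‖ :=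
        norm_nonneg _
      nlinarith [norm_nonneg ((WithLp.equiv 2 ((i : m) → ℂ)).symm (D *ᵥ (WithLp.equiv 2 _ x)) : EuclideanSpace ℂ m)]
    simpa [Matrix.toEuclideanLin_apply] using hx'

lemma polar_decomp [DecidableEq n] (X : Matrix m n ℂ) (S : Matrix n n ℂ)
    (hS : S.PosSemidef) (hSX : S * S = Xᴴ * X) :
    ∃ V : Matrix m n ℂ, ‖V‖ ≤ 1 ∧ X = V * S := by
  set μ := hS.1.eigenvalues with hμ
  set U : Matrix n n ℂ := (hS.1.eigenvectorUnitary : Matrix n n ℂ) with hUdef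
  have hU1 : Uᴴ * U = 1 := by
    rw [← star_eq_conjTranspose]
    exact (Matrix.mem_unitaryGroup_iff').mp hS.1.eigenvectorUnitary.2
  have hU2 : U * Uᴴ = 1 := by
    rw [← star_eq_conjTranspose]
    exact (Matrix.mem_unitaryGroup_iff).mp hS.1.eigenvectorUnitary.2
  have hSpec : S = U * diagonal (fun i => (μ i : ℂ)) * Uᴴ := by
    rw [← star_eq_conjTranspose]
    exact hS.1.spectral_theorem
  set g : n → ℂ := fun i => ((μ i : ℂ))⁻¹ with hg
  set e : n → ℂ := fun i => if μ i = 0 then 0 else 1 with he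
  have hge0 : ∀ i, g i * (μ i : ℂ) = e i := by
    intro i
    by_cases hi : μ i = 0
    · simp [hg, he, hi]
    · simp only [hg, he, if_neg hi]
      exact inv_mul_cancel₀ (by exact_mod_cast hi)
  have hge : diagonal g * diagonal (fun i => (μ i : ℂ)) = diagonal e := by
    rw [diagonal_mul_diagonal]
    exact congrArg diagonal (funext hge0)
  have heg : diagonal (fun i => (μ i : ℂ)) * diagonal g = diagonal e := by
    rw [diagonal_mul_diagonal]
    refine congrArg diagonal (funext fun i => ?_)
    rw [mul_comm]; exact hge0 i
  have hee : diagonal e * diagonal e = diagonal e := by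
    rw [diagonal_mul_diagonal]
    refine congrArg diagonal (funext fun i => ?_)
    by_cases hi : μ i = 0 <;> simp [he, hi]
  set T : Matrix n n ℂ := U * diagonal g * Uᴴ with hT
  set E : Matrix n n ℂ := U * diagonal e * Uᴴ with hE
  have sandwich : ∀ d₁ d₂ : n → ℂ, (U * diagonal d₁ * Uᴴ) * (U * diagonal d₂ * Uᴴ)
      = U * (diagonal d₁ * diagonal d₂) * Uᴴ := by
    intro d₁ d₂
    calc (U * diagonal d₁ * Uᴴ) * (U * diagonal d₂ * Uᴴ)
        = U * diagonal d₁ * (Uᴴ * U) * (diagonal d₂ * Uᴴ) := by simp only [Matrix.mul_assoc]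
      _ = U * (diagonal d₁ * diagonal d₂) * Uᴴ := by rw [hU1]; simp only [Matrix.mul_one, Matrix.mul_assoc]
  have hST : S * T = E := by rw [hSpec, hT, hE, sandwich, heg]
  have hTS : T * S = E := by rw [hSpec, hT, hE, sandwich, hge]
  have hEE : E * E = E := by rw [hE, sandwich, hee]
  -- X * E = X
  have hZ : (X * U)ᴴ * (X * U) = diagonal (fun i => ((μ i : ℂ))^2) := by
    have h1 : (X * U)ᴴ * (X * U) = Uᴴ * (S * S) * U := by
      rw [hSX, conjTranspose_mul]; simp only [Matrix.mul_assoc]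
    rw [h1, hSpec]
    calc Uᴴ * ((U * diagonal (fun i => (μ i : ℂ)) * Uᴴ) * (U * diagonal (fun i => (μ i : ℂ)) * Uᴴ)) * U
        = (Uᴴ * U) * diagonal (fun i => (μ i : ℂ)) * ((Uᴴ * U) * (diagonal (fun i => (μ i : ℂ)) * ((Uᴴ * U)))) := by
          simp only [Matrix.mul_assoc]
      _ = diagonal (fun i => (μ i : ℂ)) * diagonal (fun i => (μ i : ℂ)) := by
          rw [hU1]; simp only [Matrix.one_mul, Matrix.mul_one]
      _ = diagonal (fun i => ((μ i : ℂ))^2) := by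
          rw [diagonal_mul_diagonal]
          exact congrArg diagonal (funext fun i => (sq _).symm)
  have hf : ∀ i, star (1 - e i) = 1 - e i := by
    intro i
    by_cases hi : μ i = 0 <;> simp [he, hi]
  have hzero : X * U * diagonal (fun i => 1 - e i) = 0 := by
    rw [← conjTranspose_mul_self_eq_zero]
    have hdh : (diagonal (fun i => 1 - e i))ᴴ = diagonal (fun i => 1 - e i) := by
      rw [diagonal_conjTranspose]
      exact congrArg diagonal (funext fun i => hf i)
    calc (X * U * diagonal (fun i => 1 - e i))ᴴ * (X * U * diagonal (fun i => 1 - e i))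
        = (diagonal (fun i => 1 - e i))ᴴ * ((X * U)ᴴ * (X * U)) * diagonal (fun i => 1 - e i) := by
          simp only [conjTranspose_mul, Matrix.mul_assoc]
      _ = diagonal (fun i => 1 - e i) * diagonal (fun i => ((μ i : ℂ))^2) * diagonal (fun i => 1 - e i) := by
          rw [hdh, hZ]
      _ = 0 := by
          rw [diagonal_mul_diagonal, diagonal_mul_diagonal]
          have : (fun i => (1 - e i) * (μ i : ℂ)^2 * (1 - e i)) = fun _ => (0:ℂ) := by
            funext i
            by_cases hi : μ i = 0 <;> simp [he, hi]
          rw [this, diagonal_zero]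
  have hXE : X * E = X := by
    have h1 : X * U * diagonal e = X * U := by
      have hde : diagonal e = 1 - diagonal (fun i => 1 - e i) := by
        rw [← diagonal_one, diagonal_sub]
        exact congrArg diagonal (funext fun i => by simp)
      rw [hde, Matrix.mul_sub, hzero, sub_zero, Matrix.mul_one]
    rw [hE, ← Matrix.mul_assoc, ← Matrix.mul_assoc, h1, Matrix.mul_assoc, hU2, Matrix.mul_one]
  have hTH : Tᴴ = T := by
    rw [hT, conjTranspose_mul, conjTranspose_mul, conjTranspose_conjTranspose,
      diagonal_conjTranspose]
    have hsg : star g = g := by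
      funext i
      show star ((↑(μ i) : ℂ))⁻¹ = ((↑(μ i) : ℂ))⁻¹
      rw [star_inv₀, Complex.star_def, Complex.conj_ofReal]
    rw [hsg, Matrix.mul_assoc]
  refine ⟨X * T, ?_, ?_⟩
  · rw [contraction_iff]
    have hVV : (X * T)ᴴ * (X * T) = E := by
      have step : (X * T)ᴴ * (X * T) = Tᴴ * ((S * S) * T) := by
        rw [hSX, conjTranspose_mul]; simp only [Matrix.mul_assoc]
      have hSST : (S * S) * T = S * E := by rw [Matrix.mul_assoc, hST]
      rw [step, hSST, hTH, ← Matrix.mul_assoc, hTS, hEE]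
    rw [hVV]
    have h1E : (1 : Matrix n n ℂ) - E = U * diagonal (fun i => 1 - e i) * Uᴴ := by
      have : diagonal (fun i => 1 - e i) = 1 - diagonal e := by
        rw [← diagonal_one, ← diagonal_sub]
      rw [this, Matrix.mul_sub, Matrix.sub_mul, Matrix.mul_one, hU2, hE]
    rw [h1E]
    apply PosSemidef.mul_mul_conjTranspose_same
    rw [posSemidef_diagonal_iff]
    intro i
    by_cases hi : μ i = 0 <;> simp [he, hi]
  · rw [Matrix.mul_assoc, hTS, hXE]

lemma key_iff [DecidableEq m] [DecidableEq n]
    (A : Matrix m m ℂ) (C : Matrix n n ℂ) (B : Matrix m n ℂ) :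
    (fromBlocks A B Bᴴ C).PosSemidef ↔
      ∃ (hA₀ : A.PosSemidef) (hC₀ : C.PosSemidef) (D : Matrix m n ℂ),
        ‖D‖ ≤ 1 ∧ B = hA₀.sqrt * D * hC₀.sqrt := by
  constructor
  · intro hQ
    have hA₀ : A.PosSemidef := by
      have h := hQ.submatrix (Sum.inl : m → m ⊕ n)
      have he : (fromBlocks A B Bᴴ C).submatrix (Sum.inl : m → m ⊕ n) Sum.inl = A := by
        ext i j; rfl
      rwa [he] at h
    have hC₀ : C.PosSemidef := by
      have h := hQ.submatrix (Sum.inr : n → m ⊕ n)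
      have he : (fromBlocks A B Bᴴ C).submatrix (Sum.inr : n → m ⊕ n) Sum.inr = C := by
        ext i j; rfl
      rwa [he] at h
    set M := hQ.sqrt with hM
    have hMH : Mᴴ = M := hQ.posSemidef_sqrt.1
    have hMM : Mᴴ * M = fromBlocks A B Bᴴ C := by rw [hMH]; exact hQ.sqrt_mul_self
    set X : Matrix (m ⊕ n) m ℂ := M.submatrix id Sum.inl with hX
    set Y : Matrix (m ⊕ n) n ℂ := M.submatrix id Sum.inr with hY
    have hentry : ∀ (i j : m ⊕ n), (Mᴴ * M) i j = fromBlocks A B Bᴴ C i j := by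
      intro i j; rw [hMM]
    have hXX : Xᴴ * X = A := by
      ext i j
      have := hentry (Sum.inl i) (Sum.inl j)
      simpa [Matrix.mul_apply, Matrix.conjTranspose_apply, hX, Matrix.submatrix_apply] using this
    have hYY : Yᴴ * Y = C := by
      ext i j
      have := hentry (Sum.inr i) (Sum.inr j)
      simpa [Matrix.mul_apply, Matrix.conjTranspose_apply, hY, Matrix.submatrix_apply] using this
    have hXY : Xᴴ * Y = B := by
      ext i j
      have := hentry (Sum.inl i) (Sum.inr j)
      simpa [Matrix.mul_apply, Matrix.conjTranspose_apply, hX, hY, Matrix.submatrix_apply]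
        using this
    obtain ⟨V, hV, hXV⟩ := polar_decomp X hA₀.sqrt hA₀.posSemidef_sqrt
      (hA₀.sqrt_mul_self.trans hXX.symm)
    obtain ⟨W, hW, hYW⟩ := polar_decomp Y hC₀.sqrt hC₀.posSemidef_sqrt
      (hC₀.sqrt_mul_self.trans hYY.symm)
    refine ⟨hA₀, hC₀, Vᴴ * W, ?_, ?_⟩
    · calc ‖Vᴴ * W‖ ≤ ‖Vᴴ‖ * ‖W‖ := l2_opNorm_mul _ _
        _ ≤ 1 := by rw [l2_opNorm_conjTranspose]; exact mul_le_one₀ hV (norm_nonneg _) hW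
    · rw [← hXY, hXV, hYW, conjTranspose_mul, hA₀.posSemidef_sqrt.1]
      simp only [Matrix.mul_assoc]
  · rintro ⟨hA₀, hC₀, D, hD, hB⟩
    have hK : (1 - Dᴴ * D).PosSemidef := (contraction_iff D).mp hD
    set N : Matrix (m ⊕ n) (m ⊕ n) ℂ := fromBlocks 1 D 0 hK.sqrt with hN
    have hNN : Nᴴ * N = fromBlocks 1 D Dᴴ 1 := by
      rw [hN, fromBlocks_conjTranspose, fromBlocks_multiply]
      rw [conjTranspose_one, conjTranspose_zero, hK.posSemidef_sqrt.1]
      have h4 : Dᴴ * D + hK.sqrt * hK.sqrt = 1 := by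
        rw [hK.sqrt_mul_self]; abel
      rw [h4]
      simp [Matrix.one_mul, Matrix.mul_one]
    have hBlk : (fromBlocks 1 D Dᴴ 1).PosSemidef := by
      rw [← hNN]; exact posSemidef_conjTranspose_mul_self N
    set L : Matrix (m ⊕ n) (m ⊕ n) ℂ := fromBlocks hA₀.sqrt 0 0 hC₀.sqrt with hL
    have hLH : Lᴴ = L := by
      simp only [hL, fromBlocks_conjTranspose, conjTranspose_zero]
      rw [hA₀.posSemidef_sqrt.1, hC₀.posSemidef_sqrt.1]
    have hstep : fromBlocks 1 D Dᴴ 1 * L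
        = fromBlocks hA₀.sqrt (D * hC₀.sqrt) (Dᴴ * hA₀.sqrt) hC₀.sqrt := by
      rw [hL, fromBlocks_multiply]
      rw [fromBlocks_inj]
      refine ⟨by simp, by simp, by simp, by simp⟩
    have hfinal : Lᴴ * fromBlocks 1 D Dᴴ 1 * L = fromBlocks A B Bᴴ C := by
      rw [Matrix.mul_assoc, hstep, hLH, hL, fromBlocks_multiply, fromBlocks_inj]
      refine ⟨by simp [hA₀.sqrt_mul_self], ?_, ?_, by simp [hC₀.sqrt_mul_self]⟩
      · rw [hB]; simp [Matrix.mul_assoc]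
      · rw [hB]
        simp only [conjTranspose_mul, hA₀.posSemidef_sqrt.1, hC₀.posSemidef_sqrt.1,
          conjTranspose_conjTranspose]
        rw [hA₀.posSemidef_sqrt.1, hC₀.posSemidef_sqrt.1]
        simp [Matrix.mul_assoc]
    rw [← hfinal]
    exact hBlk.conjTranspose_mul_mul_same L

end Helpers

/-- For `Q = fromBlocks A B Bᴴ C` with `A`, `C` Hermitian, `Q` and `1 - Q` are positive
semidefinite iff `0 ≤ A ≤ 1`, `0 ≤ C ≤ 1` and there are contractions `D₁`, `D₂` (in the
ℓ²-operator norm) with `B = A^{1/2} D₁ C^{1/2}` and `B = (1-A)^{1/2} D₂ (1-C)^{1/2}`. -/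
theorem stmt_2 {n₁ n₂ : ℕ}
    (A : Matrix (Fin n₁) (Fin n₁) ℂ) (C : Matrix (Fin n₂) (Fin n₂) ℂ)
    (B : Matrix (Fin n₁) (Fin n₂) ℂ)
    (hA : A.IsHermitian) (hC : C.IsHermitian)
    (Q : Matrix (Fin n₁ ⊕ Fin n₂) (Fin n₁ ⊕ Fin n₂) ℂ)
    (hQ : Q = fromBlocks A B Bᴴ C) :
    (Q.PosSemidef ∧ (1 - Q).PosSemidef) ↔
      ∃ (hA₀ : A.PosSemidef) (hA₁ : (1 - A).PosSemidef)
        (hC₀ : C.PosSemidef) (hC₁ : (1 - C).PosSemidef)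
        (D₁ D₂ : Matrix (Fin n₁) (Fin n₂) ℂ),
        ‖D₁‖ ≤ 1 ∧ ‖D₂‖ ≤ 1 ∧
        B = CFC.sqrt A * D₁ * CFC.sqrt C ∧
        B = CFC.sqrt (1 - A) * D₂ * CFC.sqrt (1 - C) := by
  subst hQ
  have h1Q : (1 : Matrix (Fin n₁ ⊕ Fin n₂) (Fin n₁ ⊕ Fin n₂) ℂ) - fromBlocks A B Bᴴ C
      = fromBlocks (1 - A) (-B) (-B)ᴴ (1 - C) := by
    rw [← fromBlocks_one, conjTranspose_neg]
    ext (i | i) (j | j) <;>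
      simp [fromBlocks, Matrix.sub_apply]
  rw [key_iff A C B, h1Q, key_iff (1 - A) (1 - C) (-B)]
  constructor
  · rintro ⟨⟨hA₀, hC₀, D₁, hD₁, hB₁⟩, ⟨hA₁, hC₁, D', hD', hB'⟩⟩
    refine ⟨hA₀, hA₁, hC₀, hC₁, D₁, -D', hD₁, by simpa using hD', hB₁, ?_⟩
    have := congrArg Neg.neg hB'
    simpa [Matrix.neg_mul, Matrix.mul_neg, Matrix.PosSemidef.sqrt] using this
  · rintro ⟨hA₀, hA₁, hC₀, hC₁, D₁, D₂, hD₁, hD₂, hB₁, hB₂⟩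
    refine ⟨⟨hA₀, hC₀, D₁, hD₁, hB₁⟩, ⟨hA₁, hC₁, -D₂, by simpa using hD₂, ?_⟩⟩
    rw [hB₂]
    simp [Matrix.mul_neg, Matrix.neg_mul, Matrix.PosSemidef.sqrt]
end

section
/- Let C be a Hermitian n×n complex matrix such that both C and 1 − C are positive definite, and let L be a positive semidefinite n×n complex matrix. Then the matrix 1 − C + CL is invertible. -/
open Matrix
open scoped ComplexOrder

/-- If `C` and `1 - C` are positive definite and `L` is positive semidefinite,
then `1 - C + C * L` is invertible. -/
theorem stmt_3 {n : ℕ}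
    (C L : Matrix (Fin n) (Fin n) ℂ)
    (hC : C.PosDef) (hC' : (1 - C).PosDef) (hL : L.PosSemidef) :
    IsUnit (1 - C + C * L) := by
  have hCps := hC.posSemidef
  open scoped MatrixOrder in set S := CFC.sqrt C with hSdef
  have hS : S.PosSemidef := by open scoped MatrixOrder in exact (CFC.sqrt_nonneg C).posSemidef
  have hSS : S * S = C := by open scoped MatrixOrder in exact CFC.sqrt_mul_sqrt_self C hCps.nonneg
  have hSH : Sᴴ = S := hS.1
  -- S is a unit
  have hSu : IsUnit S := by
    rw [Matrix.isUnit_iff_isUnit_det]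
    have hdd : S.det * S.det = C.det := by rw [← Matrix.det_mul, hSS]
    have hCd : IsUnit C.det := (Matrix.isUnit_iff_isUnit_det C).mp hC.isUnit
    rw [← hdd] at hCd
    exact isUnit_of_mul_isUnit_left hCd
  have hSdet : IsUnit S.det := (Matrix.isUnit_iff_isUnit_det S).mp hSu
  -- S commutes with 1 - C
  have hcomm : S * (1 - C) = (1 - C) * S := by
    rw [mul_sub, sub_mul, mul_one, one_mul, ← hSS, mul_assoc]
  -- key identity
  have key2 : S * ((1 - C) + S * L * S) = (1 - C + C * L) * S := by
    rw [mul_add, hcomm, add_mul, ← hSS]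
    noncomm_ring
  have key : 1 - C + C * L = S * ((1 - C) + S * L * S) * S⁻¹ := by
    rw [key2, mul_assoc, Matrix.mul_nonsing_inv _ hSdet, mul_one]
  have hmid : ((1 - C) + S * L * S).PosDef := by
    have h2 : (Sᴴ * L * S).PosSemidef := hL.conjTranspose_mul_mul_same S
    rw [hSH] at h2
    exact hC'.add_posSemidef h2
  rw [key]
  exact (hSu.mul hmid.isUnit).mul (Matrix.isUnit_nonsing_inv_iff.mpr hSu)
end

section
/- Let A be an n₁×n₁ complex matrix, C an n₂×n₂ complex matrix, B an n₁×n₂ complex matrix, Q = fromBlocks A B Bᴴ C, let K be an n₁×n₁ complex matrix and L an n₂×n₂ complex matrix such that 1 − C + CL is invertible, and set Ã = A − B(L − 1)(1 − C + CL)⁻¹Bᴴ. Then det(1 − Q + Q·(K ⊕ L)) = det(1 − C + CL) · det(1 − Ã + ÃK), where K ⊕ L denotes the block-diagonal matrix fromBlocks K 0 0 L. -/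
open Matrix

/-- For `Q = fromBlocks A B Bᴴ C`, matrices `K`, `L` with `1 - C + C * L` invertible and
`Atilde = A - B (L - 1) (1 - C + C L)⁻¹ Bᴴ`, one has
`det (1 - Q + Q (K ⊕ L)) = det (1 - C + C L) * det (1 - Atilde + Atilde K)`. -/
theorem stmt_5 {n₁ n₂ : ℕ}
    (A : Matrix (Fin n₁) (Fin n₁) ℂ) (C : Matrix (Fin n₂) (Fin n₂) ℂ)
    (B : Matrix (Fin n₁) (Fin n₂) ℂ)
    (Q : Matrix (Fin n₁ ⊕ Fin n₂) (Fin n₁ ⊕ Fin n₂) ℂ)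
    (hQ : Q = fromBlocks A B Bᴴ C)
    (K : Matrix (Fin n₁) (Fin n₁) ℂ) (L : Matrix (Fin n₂) (Fin n₂) ℂ)
    (hinv : IsUnit (1 - C + C * L))
    (Atilde : Matrix (Fin n₁) (Fin n₁) ℂ)
    (hAtilde : Atilde = A - B * (L - 1) * (1 - C + C * L)⁻¹ * Bᴴ) :
    (1 - Q + Q * fromBlocks K 0 0 L).det
      = (1 - C + C * L).det * (1 - Atilde + Atilde * K).det := by
  subst hQ hAtilde
  have h1 : (1 : Matrix (Fin n₁ ⊕ Fin n₂) (Fin n₁ ⊕ Fin n₂) ℂ) = fromBlocks 1 0 0 1 :=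
    (fromBlocks_one).symm
  have hblock : (1 - fromBlocks A B Bᴴ C + fromBlocks A B Bᴴ C * fromBlocks K 0 0 L)
      = fromBlocks (1 - A + A * K) (-B + B * L) (-Bᴴ + Bᴴ * K) (1 - C + C * L) := by
    rw [h1, fromBlocks_multiply, sub_eq_add_neg, fromBlocks_neg, fromBlocks_add,
      fromBlocks_add]
    congr 1 <;> simp [sub_eq_add_neg]
  rw [hblock]
  have := hinv.invertible
  rw [Matrix.det_fromBlocks₂₂]
  congr 1
  rw [Matrix.invOf_eq_nonsing_inv]
  set M := (1 - C + C * L)⁻¹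
  congr 1
  have e0 : -B + B * L = B * (L - 1) := by rw [Matrix.mul_sub, Matrix.mul_one]; abel
  have e0' : -Bᴴ + Bᴴ * K = Bᴴ * K - Bᴴ := by abel
  rw [e0, e0', Matrix.mul_sub, ← Matrix.mul_assoc, Matrix.sub_mul]
  abel
end

section
/- Let C and L be Hermitian n×n complex matrices such that 1 − C + CL is invertible. Then the matrix (L − 1)(1 − C + CL)⁻¹ is Hermitian; equivalently, (1 − C + LC)⁻¹(L − 1) = (L − 1)(1 − C + CL)⁻¹. Consequently, for any n₁×n complex matrix B, the matrix B(L − 1)(1 − C + CL)⁻¹Bᴴ is Hermitian. -/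
open Matrix

/-- For Hermitian `C`, `L` with `1 - C + C L` invertible, the matrix
`(L - 1)(1 - C + C L)⁻¹` is Hermitian; equivalently
`(1 - C + L C)⁻¹ (L - 1) = (L - 1)(1 - C + C L)⁻¹`; consequently
`B (L - 1)(1 - C + C L)⁻¹ Bᴴ` is Hermitian for every rectangular `B`. -/
theorem stmt_6 {n n₁ : ℕ}
    (C L : Matrix (Fin n) (Fin n) ℂ)
    (hC : C.IsHermitian) (hL : L.IsHermitian)
    (hinv : IsUnit (1 - C + C * L)) :
    ((L - 1) * (1 - C + C * L)⁻¹).IsHermitian ∧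
    (1 - C + L * C)⁻¹ * (L - 1) = (L - 1) * (1 - C + C * L)⁻¹ ∧
    ∀ B : Matrix (Fin n₁) (Fin n) ℂ,
      (B * (L - 1) * (1 - C + C * L)⁻¹ * Bᴴ).IsHermitian := by
  set N := 1 - C + C * L with hN
  have hMH : Nᴴ = 1 - C + L * C := by
    simp [hN, conjTranspose_add, conjTranspose_sub, conjTranspose_mul,
      hC.eq, hL.eq]
  have hdetN : IsUnit N.det := (isUnit_iff_isUnit_det N).mp hinv
  have hdetM : IsUnit (1 - C + L * C).det := by
    rw [← hMH, det_conjTranspose]; exact hdetN.star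
  have key : (1 - C + L * C) * (L - 1) = (L - 1) * N := by
    rw [hN]; noncomm_ring
  have heq : (1 - C + L * C)⁻¹ * (L - 1) = (L - 1) * N⁻¹ := by
    have : (1 - C + L * C)⁻¹ * ((1 - C + L * C) * (L - 1)) * N⁻¹
        = (1 - C + L * C)⁻¹ * ((L - 1) * N) * N⁻¹ := by rw [key]
    rwa [← mul_assoc, nonsing_inv_mul _ hdetM, one_mul, mul_assoc ((1-C+L*C)⁻¹),
      mul_assoc, mul_nonsing_inv _ hdetN, mul_one, eq_comm] at this
  have hherm : ((L - 1) * N⁻¹).IsHermitian := by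
    unfold Matrix.IsHermitian
    rw [conjTranspose_mul, conjTranspose_nonsing_inv, hMH,
      conjTranspose_sub, hL.eq, conjTranspose_one, heq]
  refine ⟨hherm, heq, fun B => ?_⟩
  have h2 : B * (L - 1) * N⁻¹ * Bᴴ = B * ((L - 1) * N⁻¹) * Bᴴ := by
    rw [Matrix.mul_assoc B]
  rw [h2]
  exact isHermitian_mul_mul_conjTranspose B hherm
end

section
/- Let C be a Hermitian n×n complex matrix such that both C and 1 − C are positive definite, and let L be a positive semidefinite n×n complex matrix. Then the Hermitian matrix M := (1 − L)(1 − C + CL)⁻¹ satisfies −C⁻¹ ≤ M ≤ (1 − C)⁻¹. -/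
open Matrix
open scoped ComplexOrder

/-- Auxiliary algebra identity used below. -/
private lemma aux_alg {n : ℕ} (C L N : Matrix (Fin n) (Fin n) ℂ)
    (h : (1 - C) * N = 1) :
    (1 - C + L * C) * (N * C * L + L) = L + L * (C + C * N * C) * L := by
  calc (1 - C + L * C) * (N * C * L + L)
      = (1 - C) * N * (C * L) + (L * (C * N * C)) * L + (1 - C + L * C) * L := by
        noncomm_ring
    _ = L + L * (C + C * N * C) * L := by rw [h]; noncomm_ring

/-- If `C` and `1 - C` are positive definite and `L` is positive semidefinite, then
`M = (1 - L)(1 - C + C L)⁻¹` satisfies `-C⁻¹ ≤ M ≤ (1 - C)⁻¹`. -/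
theorem stmt_7 {n : ℕ}
    (C L : Matrix (Fin n) (Fin n) ℂ)
    (hC : C.PosDef) (hC' : (1 - C).PosDef) (hL : L.PosSemidef)
    (M : Matrix (Fin n) (Fin n) ℂ)
    (hM : M = (1 - L) * (1 - C + C * L)⁻¹) :
    (M - (-C⁻¹)).PosSemidef ∧ ((1 - C)⁻¹ - M).PosSemidef := by
  classical
  set A : Matrix (Fin n) (Fin n) ℂ := 1 - C + C * L with hA
  have hCps := hC.posSemidef
  set S := (open scoped MatrixOrder in CFC.sqrt C) with hSdef
  have hSps : S.PosSemidef := by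
    open scoped MatrixOrder in exact (CFC.sqrt_nonneg C).posSemidef
  have hSS : S * S = C := by
    open scoped MatrixOrder in exact CFC.sqrt_mul_sqrt_self C hCps.nonneg
  have hSH : Sᴴ = S := hSps.isHermitian
  have hLH : Lᴴ = L := hL.isHermitian
  have hCH : Cᴴ = C := hC.isHermitian
  have hdetC : IsUnit C.det := (Matrix.isUnit_iff_isUnit_det _).1 hC.isUnit
  have hdetC' : IsUnit (1 - C).det := (Matrix.isUnit_iff_isUnit_det _).1 hC'.isUnit
  have hdetS : IsUnit S.det := by
    have h2 : S.det * S.det = C.det := by rw [← Matrix.det_mul, hSS]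
    have hne : C.det ≠ 0 := hdetC.ne_zero
    rw [← h2] at hne
    exact isUnit_iff_ne_zero.2 (left_ne_zero_of_mul hne)
  have hSinj : Function.Injective S.mulVec :=
    Matrix.mulVec_injective_iff_isUnit.2 ((Matrix.isUnit_iff_isUnit_det _).2 hdetS)
  -- C * (1 - C) is positive definite
  have hmul : S * (1 - C) * S = C * (1 - C) := by rw [← hSS]; noncomm_ring
  have key : (Sᴴ * (1 - C) * S).PosDef := by
    exact hC'.conjTranspose_mul_mul_same hSinj
  have hCmC : (C * (1 - C)).PosDef := by rwa [hSH, hmul] at key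
  have hCLC : (C * L * C).PosSemidef := by
    have := hL.conjTranspose_mul_mul_same C
    rwa [hCH] at this
  set B := C * (1 - C) + C * L * C with hBdef
  have hB : B.PosDef := hCmC.add_posSemidef hCLC
  have hAC : A * C = B := by rw [hA, hBdef]; noncomm_ring
  have hdetB : IsUnit B.det := (Matrix.isUnit_iff_isUnit_det _).1 hB.isUnit
  have hdetA : IsUnit A.det := by
    have h : A.det * C.det = B.det := by rw [← Matrix.det_mul, hAC]
    exact isUnit_of_mul_isUnit_left (h ▸ hdetB)
  have hAinv : A⁻¹ * A = 1 := Matrix.nonsing_inv_mul A hdetA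
  -- Goal 1 : M + C⁻¹ = B⁻¹
  have hCinv : C⁻¹ * C = 1 := Matrix.nonsing_inv_mul C hdetC
  have hMC : (M + C⁻¹) * A = C⁻¹ := by
    have h1 : (1 - L) * A⁻¹ * A = 1 - L := by
      rw [Matrix.mul_assoc, hAinv, Matrix.mul_one]
    have h2 : C⁻¹ * A = C⁻¹ - 1 + L := by
      rw [hA, Matrix.mul_add, Matrix.mul_sub, Matrix.mul_one, hCinv,
        ← Matrix.mul_assoc, hCinv, Matrix.one_mul]
    rw [hM, Matrix.add_mul, h1, h2]
    noncomm_ring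
  have hBinv : B⁻¹ = M + C⁻¹ := by
    apply Matrix.inv_eq_left_inv
    rw [← hAC, ← Matrix.mul_assoc, hMC, hCinv]
  have g1 : (M - (-C⁻¹)).PosSemidef := by
    rw [sub_neg_eq_add, ← hBinv]
    exact hB.inv.posSemidef
  -- Goal 2
  set N := (1 - C)⁻¹ with hN
  have hCN : (1 - C) * N = 1 := Matrix.mul_nonsing_inv _ hdetC'
  have hNC : N * (1 - C) = 1 := Matrix.nonsing_inv_mul _ hdetC'
  set G := C + C * N * C with hG
  have hGps : G.PosSemidef := by
    have h1 : (Cᴴ * N * C).PosSemidef := hC'.inv.posSemidef.conjTranspose_mul_mul_same C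
    rw [hCH] at h1
    exact hC.posSemidef.add h1
  have hEps : (L + L * G * L).PosSemidef := by
    have h1 : (Lᴴ * G * L).PosSemidef := hGps.conjTranspose_mul_mul_same L
    rw [hLH] at h1
    exact hL.add h1
  have hAH : Aᴴ = 1 - C + L * C := by
    rw [hA]
    simp [conjTranspose_add, conjTranspose_sub, conjTranspose_one, conjTranspose_mul, hCH, hLH]
  have e1 : (N - (1 - L) * A⁻¹) * A = N * C * L + L := by
    rw [Matrix.sub_mul, Matrix.mul_assoc (1 - L), hAinv, Matrix.mul_one, hA,
      Matrix.mul_add, Matrix.mul_sub, Matrix.mul_one]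
    have hNC' : N - N * C = 1 := by rw [Matrix.mul_sub, Matrix.mul_one] at hNC; exact hNC
    rw [hNC']
    noncomm_ring
  have hE : Aᴴ * ((1 - C)⁻¹ - M) * A = L + L * G * L := by
    rw [hM, hAH, hG, ← hN, Matrix.mul_assoc, e1]
    exact aux_alg C L N hCN
  have hdetAH : IsUnit Aᴴ.det := by
    rw [Matrix.det_conjTranspose]; exact hdetA.star
  have hX2 : (1 - C)⁻¹ - M = (A⁻¹)ᴴ * (L + L * G * L) * A⁻¹ := by
    rw [← hE, Matrix.conjTranspose_nonsing_inv]
    have h : (Aᴴ)⁻¹ * (Aᴴ * ((1 - C)⁻¹ - M) * A) * A⁻¹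
        = (Aᴴ)⁻¹ * Aᴴ * ((1 - C)⁻¹ - M) * (A * A⁻¹) := by noncomm_ring
    rw [h, Matrix.nonsing_inv_mul _ hdetAH, Matrix.mul_nonsing_inv _ hdetA,
      Matrix.one_mul, Matrix.mul_one]
  have g2 : ((1 - C)⁻¹ - M).PosSemidef := by
    rw [hX2]
    exact hEps.conjTranspose_mul_mul_same A⁻¹
  exact ⟨g1, g2⟩
end

section
/- Let A be a Hermitian n₁×n₁ complex matrix, C a Hermitian n₂×n₂ complex matrix such that both C and 1 − C are positive definite, B an n₁×n₂ complex matrix, and L a positive semidefinite n₂×n₂ complex matrix. Set Ã = A − B(L − 1)(1 − C + CL)⁻¹Bᴴ. Then A − B C⁻¹ Bᴴ ≤ Ã ≤ A + B (1 − C)⁻¹ Bᴴ. -/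
open Matrix
open scoped ComplexOrder

lemma aux_inv_sub_inv_psd {n : ℕ} {P Q : Matrix (Fin n) (Fin n) ℂ}
    (hP : P.PosDef) (hQ : Q.PosDef) (h : (Q - P).PosSemidef) :
    (P⁻¹ - Q⁻¹).PosSemidef := by
  have hP2 : P * P⁻¹ = 1 := Matrix.mul_nonsing_inv _ hP.det_pos.ne'.isUnit
  have hQ1 : Q⁻¹ * Q = 1 := Matrix.nonsing_inv_mul _ hQ.det_pos.ne'.isUnit
  have hQ2 : Q * Q⁻¹ = 1 := Matrix.mul_nonsing_inv _ hQ.det_pos.ne'.isUnit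
  have hP1 : P⁻¹ * P = 1 := Matrix.nonsing_inv_mul _ hP.det_pos.ne'.isUnit
  have h1 : Q⁻¹ * (Q - P) * P⁻¹ = P⁻¹ - Q⁻¹ := by
    have : Q⁻¹ * (Q - P) * P⁻¹ = Q⁻¹ * Q * P⁻¹ - Q⁻¹ * (P * P⁻¹) := by noncomm_ring
    rw [this, hQ1, hP2, one_mul, mul_one]
  have h2 : Q⁻¹ + P⁻¹ * (Q - P) * Q⁻¹ = P⁻¹ := by
    have : P⁻¹ * (Q - P) * Q⁻¹ = P⁻¹ * Q * Q⁻¹ - P⁻¹ * P * Q⁻¹ := by noncomm_ring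
    rw [this, hP1, one_mul, mul_assoc, hQ2, mul_one]
    abel
  have key : P⁻¹ - Q⁻¹ =
      Q⁻¹ * (Q - P) * Q⁻¹ + (Q⁻¹ * (Q - P)) * P⁻¹ * ((Q - P) * Q⁻¹) := by
    have : Q⁻¹ * (Q - P) * Q⁻¹ + (Q⁻¹ * (Q - P)) * P⁻¹ * ((Q - P) * Q⁻¹)
        = Q⁻¹ * (Q - P) * (Q⁻¹ + P⁻¹ * (Q - P) * Q⁻¹) := by noncomm_ring
    rw [this, h2, h1]
  rw [key]
  have hE : (Q - P)ᴴ = Q - P := h.isHermitian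
  have hQi : (Q⁻¹)ᴴ = Q⁻¹ := hQ.isHermitian.inv
  have t1 : ((Q⁻¹)ᴴ * (Q - P) * Q⁻¹).PosSemidef := h.conjTranspose_mul_mul_same Q⁻¹
  rw [hQi] at t1
  have t2 : (((Q - P) * Q⁻¹)ᴴ * P⁻¹ * ((Q - P) * Q⁻¹)).PosSemidef :=
    hP.inv.posSemidef.conjTranspose_mul_mul_same ((Q - P) * Q⁻¹)
  rw [conjTranspose_mul, hE, hQi] at t2
  exact t1.add t2

/-- For `A` Hermitian, `C` with `C`, `1 - C` positive definite, `L` positive semidefinite and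
`Ã = A - B (L - 1)(1 - C + C L)⁻¹ Bᴴ`, one has `A - B C⁻¹ Bᴴ ≤ Ã ≤ A + B (1 - C)⁻¹ Bᴴ`. -/
theorem stmt_8 {n₁ n₂ : ℕ}
    (A : Matrix (Fin n₁) (Fin n₁) ℂ) (C : Matrix (Fin n₂) (Fin n₂) ℂ)
    (B : Matrix (Fin n₁) (Fin n₂) ℂ)
    (hA : A.IsHermitian) (hC : C.PosDef) (hC' : (1 - C).PosDef)
    (L : Matrix (Fin n₂) (Fin n₂) ℂ) (hL : L.PosSemidef)
    (Atilde : Matrix (Fin n₁) (Fin n₁) ℂ)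
    (hAtilde : Atilde = A - B * (L - 1) * (1 - C + C * L)⁻¹ * Bᴴ) :
    (Atilde - (A - B * C⁻¹ * Bᴴ)).PosSemidef ∧
    ((A + B * (1 - C)⁻¹ * Bᴴ) - Atilde).PosSemidef := by
  have hC1 : C⁻¹ * C = 1 := Matrix.nonsing_inv_mul _ hC.det_pos.ne'.isUnit
  have hC2 : C * C⁻¹ = 1 := Matrix.mul_nonsing_inv _ hC.det_pos.ne'.isUnit
  have h1C2 : (1 - C) * (1 - C)⁻¹ = 1 := Matrix.mul_nonsing_inv _ hC'.det_pos.ne'.isUnit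
  have hCi : (C⁻¹)ᴴ = C⁻¹ := hC.isHermitian.inv
  -- K := C⁻¹ - 1 is positive definite
  have hKpd : (C⁻¹ - 1).PosDef := by
    have t : ((1 - C) * C⁻¹ * (1 - C)ᴴ).PosSemidef :=
      hC.inv.posSemidef.mul_mul_conjTranspose_same (1 - C)
    rw [hC'.isHermitian] at t
    have eq : C⁻¹ - 1 = (1 - C) + (1 - C) * C⁻¹ * (1 - C) := by
      have e : (1 - C) * C⁻¹ * (1 - C) = C⁻¹ - C⁻¹ * C - C * C⁻¹ + C * C⁻¹ * C := by
        noncomm_ring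
      rw [e, hC1, hC2, one_mul]
      abel
    rw [eq]
    exact hC'.add_posSemidef t
  -- N := C⁻¹ - 1 + L is positive definite
  have hNpd : (C⁻¹ - 1 + L).PosDef := hKpd.add_posSemidef hL
  have hN2 : (C⁻¹ - 1 + L) * (C⁻¹ - 1 + L)⁻¹ = 1 :=
    Matrix.mul_nonsing_inv _ hNpd.det_pos.ne'.isUnit
  -- the inverse of 1 - C + C L
  have hD : (1 - C + C * L)⁻¹ = (C⁻¹ - 1 + L)⁻¹ * C⁻¹ := by
    have hDeq : 1 - C + C * L = C * (C⁻¹ - 1 + L) := by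
      have : C * (C⁻¹ - 1 + L) = C * C⁻¹ - C + C * L := by noncomm_ring
      rw [this, hC2]
    rw [hDeq, Matrix.mul_inv_rev]
  -- key identity 1
  have hM1 : C⁻¹ - (L - 1) * ((C⁻¹ - 1 + L)⁻¹ * C⁻¹)
      = C⁻¹ * (C⁻¹ - 1 + L)⁻¹ * C⁻¹ := by
    have s : (C⁻¹ - 1 + L - (L - 1)) * ((C⁻¹ - 1 + L)⁻¹ * C⁻¹)
        = (C⁻¹ - 1 + L) * (C⁻¹ - 1 + L)⁻¹ * C⁻¹
          - (L - 1) * ((C⁻¹ - 1 + L)⁻¹ * C⁻¹) := by noncomm_ring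
    rw [hN2, one_mul] at s
    have s2 : C⁻¹ - 1 + L - (L - 1) = C⁻¹ := by abel
    rw [s2] at s
    rw [← s]
    noncomm_ring
  -- key identity 2 : (1-C)⁻¹ + C⁻¹ = C⁻¹ (C⁻¹-1)⁻¹ C⁻¹
  have hKinv : (C⁻¹ - 1)⁻¹ = C * ((1 - C)⁻¹ + C⁻¹) * C :=
    Matrix.inv_eq_right_inv (by
      have s1 : (C⁻¹ - 1) * (C * ((1 - C)⁻¹ + C⁻¹) * C)
          = ((C⁻¹ - 1) * C) * (((1 - C)⁻¹ + C⁻¹) * C) := by noncomm_ring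
      have s2 : (C⁻¹ - 1) * C = 1 - C := by rw [sub_mul, hC1, one_mul]
      have s3 : (1 - C) * (((1 - C)⁻¹ + C⁻¹) * C)
          = ((1 - C) * (1 - C)⁻¹) * C + ((1 - C) * C⁻¹) * C := by noncomm_ring
      have s4 : (1 - C) * C⁻¹ = C⁻¹ - 1 := by rw [sub_mul, one_mul, hC2]
      rw [s1, s2, s3, h1C2, s4, one_mul, sub_mul, hC1, one_mul]
      abel)
  have hM2' : (1 - C)⁻¹ + C⁻¹ = C⁻¹ * (C⁻¹ - 1)⁻¹ * C⁻¹ := by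
    rw [hKinv]
    have : C⁻¹ * (C * ((1 - C)⁻¹ + C⁻¹) * C) * C⁻¹
        = (C⁻¹ * C) * ((1 - C)⁻¹ + C⁻¹) * (C * C⁻¹) := by noncomm_ring
    rw [this, hC1, hC2, one_mul, mul_one]
  -- key identity 2 final form
  have hM2 : (1 - C)⁻¹ + (L - 1) * ((C⁻¹ - 1 + L)⁻¹ * C⁻¹)
      = C⁻¹ * ((C⁻¹ - 1)⁻¹ - (C⁻¹ - 1 + L)⁻¹) * C⁻¹ := by
    have e1 : (L - 1) * ((C⁻¹ - 1 + L)⁻¹ * C⁻¹)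
        = C⁻¹ - C⁻¹ * (C⁻¹ - 1 + L)⁻¹ * C⁻¹ := by
      rw [← hM1]; abel
    rw [e1]
    have e2 : C⁻¹ * ((C⁻¹ - 1)⁻¹ - (C⁻¹ - 1 + L)⁻¹) * C⁻¹
        = C⁻¹ * (C⁻¹ - 1)⁻¹ * C⁻¹ - C⁻¹ * (C⁻¹ - 1 + L)⁻¹ * C⁻¹ := by noncomm_ring
    rw [e2, ← hM2']
    abel
  -- positivity of the two middle matrices
  have hP1 : (C⁻¹ * (C⁻¹ - 1 + L)⁻¹ * C⁻¹).PosSemidef := by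
    have t := hNpd.inv.posSemidef.conjTranspose_mul_mul_same C⁻¹
    rwa [hCi] at t
  have hP2 : (C⁻¹ * ((C⁻¹ - 1)⁻¹ - (C⁻¹ - 1 + L)⁻¹) * C⁻¹).PosSemidef := by
    have inner : ((C⁻¹ - 1)⁻¹ - (C⁻¹ - 1 + L)⁻¹).PosSemidef := by
      refine aux_inv_sub_inv_psd hKpd hNpd ?_
      have : C⁻¹ - 1 + L - (C⁻¹ - 1) = L := by abel
      rw [this]; exact hL
    have t := inner.conjTranspose_mul_mul_same C⁻¹
    rwa [hCi] at t
  subst hAtilde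
  constructor
  · rw [hD]
    have e : A - B * (L - 1) * ((C⁻¹ - 1 + L)⁻¹ * C⁻¹) * Bᴴ - (A - B * C⁻¹ * Bᴴ)
        = B * (C⁻¹ - (L - 1) * ((C⁻¹ - 1 + L)⁻¹ * C⁻¹)) * Bᴴ := by
      conv_rhs => rw [Matrix.mul_sub B, Matrix.sub_mul, ← Matrix.mul_assoc B (L - 1)]
      abel
    rw [e, hM1]
    exact hP1.mul_mul_conjTranspose_same B
  · rw [hD]
    have e : A + B * (1 - C)⁻¹ * Bᴴ - (A - B * (L - 1) * ((C⁻¹ - 1 + L)⁻¹ * C⁻¹) * Bᴴ)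
        = B * ((1 - C)⁻¹ + (L - 1) * ((C⁻¹ - 1 + L)⁻¹ * C⁻¹)) * Bᴴ := by
      conv_rhs => rw [Matrix.mul_add B, Matrix.add_mul, ← Matrix.mul_assoc B (L - 1)]
      abel
    rw [e, hM2]
    exact hP2.mul_mul_conjTranspose_same B
end

section
/- Let A be a Hermitian n₁×n₁ complex matrix, C a Hermitian n₂×n₂ complex matrix such that both C and 1 − C are positive definite, and B an n₁×n₂ complex matrix satisfying B C⁻¹ Bᴴ ≤ A and B (1 − C)⁻¹ Bᴴ ≤ 1 − A. Then for every positive semidefinite n₂×n₂ complex matrix L, the matrix Ã = A − B(L − 1)(1 − C + CL)⁻¹Bᴴ satisfies 0 ≤ Ã ≤ 1, i.e. both Ã and 1 − Ã are positive semidefinite. -/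
open Matrix
open scoped ComplexOrder

/-- Conjugation of a positive definite matrix by an invertible matrix is positive definite. -/
lemma posDef_conj_of_isUnit {n : ℕ} {M P : Matrix (Fin n) (Fin n) ℂ}
    (hM : M.PosDef) (hP : IsUnit P) : (Pᴴ * M * P).PosDef := by
  refine Matrix.posDef_iff_dotProduct_mulVec.mpr ⟨?_, ?_⟩
  · exact Matrix.isHermitian_conjTranspose_mul_mul P hM.1
  · intro x hx
    have hPx : P *ᵥ x ≠ 0 := by
      have hinj : Function.Injective P.mulVec := Matrix.mulVec_injective_iff_isUnit.mpr hP
      intro h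
      exact hx (hinj (by simpa using h))
    simpa only [star_mulVec, dotProduct_mulVec, vecMul_vecMul] using hM.dotProduct_mulVec_pos hPx

/-- For `A` Hermitian, `C`, `1 - C` positive definite, and `B` with `B C⁻¹ Bᴴ ≤ A` and
`B (1 - C)⁻¹ Bᴴ ≤ 1 - A`, every positive semidefinite `L` gives
`0 ≤ A - B (L - 1)(1 - C + C L)⁻¹ Bᴴ ≤ 1`. -/
theorem stmt_9 {n₁ n₂ : ℕ}
    (A : Matrix (Fin n₁) (Fin n₁) ℂ) (C : Matrix (Fin n₂) (Fin n₂) ℂ)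
    (B : Matrix (Fin n₁) (Fin n₂) ℂ)
    (hA : A.IsHermitian) (hC : C.PosDef) (hC' : (1 - C).PosDef)
    (hB₁ : (A - B * C⁻¹ * Bᴴ).PosSemidef)
    (hB₂ : ((1 - A) - B * (1 - C)⁻¹ * Bᴴ).PosSemidef) :
    ∀ L : Matrix (Fin n₂) (Fin n₂) ℂ, L.PosSemidef →
      ∀ Atilde : Matrix (Fin n₁) (Fin n₁) ℂ,
        Atilde = A - B * (L - 1) * (1 - C + C * L)⁻¹ * Bᴴ →
        Atilde.PosSemidef ∧ (1 - Atilde).PosSemidef := by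
  intro L hL Atilde hAt
  set D : Matrix (Fin n₂) (Fin n₂) ℂ := 1 - C with hD
  set N : Matrix (Fin n₂) (Fin n₂) ℂ := 1 - C + C * L with hN
  -- square root of C
  open scoped MatrixOrder Matrix.Norms.L2Operator in
  set S : Matrix (Fin n₂) (Fin n₂) ℂ := CFC.sqrt C with hS
  open scoped MatrixOrder Matrix.Norms.L2Operator in
  have hS2 : S * S = C := CFC.sqrt_mul_sqrt_self C hC.posSemidef.nonneg
  open scoped MatrixOrder Matrix.Norms.L2Operator in
  have hSH : Sᴴ = S := (CFC.sqrt_nonneg C).posSemidef.isHermitian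
  have hSunit : IsUnit S := by
    rw [Matrix.isUnit_iff_isUnit_det]
    have : S.det * S.det = C.det := by rw [← Matrix.det_mul, hS2]
    have hCdet : IsUnit C.det := (Matrix.isUnit_iff_isUnit_det C).mp hC.isUnit
    exact isUnit_of_mul_isUnit_left (this ▸ hCdet)
  have hSC : S * C = C * S := by rw [← hS2, mul_assoc]
  have hSD : S * D = D * S := by
    rw [hD, mul_sub, sub_mul, mul_one, one_mul, hSC]
  have hCunit : IsUnit C.det := (Matrix.isUnit_iff_isUnit_det C).mp hC.isUnit
  have hDunit : IsUnit D.det := (Matrix.isUnit_iff_isUnit_det D).mp hC'.isUnit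
  have hCi : C * C⁻¹ = 1 := Matrix.mul_nonsing_inv C hCunit
  have hiC : C⁻¹ * C = 1 := Matrix.nonsing_inv_mul C hCunit
  have hDi : D * D⁻¹ = 1 := Matrix.mul_nonsing_inv D hDunit
  have hiD : D⁻¹ * D = 1 := Matrix.nonsing_inv_mul D hDunit
  have hSDi : S * D⁻¹ = D⁻¹ * S := by
    have h2 : D⁻¹ * (S * D) * D⁻¹ = D⁻¹ * (D * S) * D⁻¹ := by rw [hSD]
    calc S * D⁻¹ = (D⁻¹ * D) * S * D⁻¹ := by rw [hiD, one_mul]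
    _ = D⁻¹ * (D * S) * D⁻¹ := by simp only [mul_assoc]
    _ = D⁻¹ * (S * D) * D⁻¹ := h2.symm
    _ = D⁻¹ * S * (D * D⁻¹) := by simp only [mul_assoc]
    _ = D⁻¹ * S := by rw [hDi, mul_one]
  -- (1-C)C is positive definite (conjugation of 1-C by sqrt C)
  have hDC_eq : D * C = Sᴴ * D * S := by
    rw [hSH, ← hS2, ← mul_assoc, ← hSD]
  have hDC_pd : (D * C).PosDef := hDC_eq ▸ posDef_conj_of_isUnit hC' hSunit
  -- N * C is positive definite
  have hCLC : (C * L * C).PosSemidef := by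
    have := hL.conjTranspose_mul_mul_same C
    rwa [hC.isHermitian.eq] at this
  have hNC_eq : N * C = D * C + C * L * C := by rw [hN, hD, add_mul, mul_assoc]
  have hNC_pd : (N * C).PosDef := hNC_eq ▸ hDC_pd.add_posSemidef hCLC
  -- N is invertible
  have hNunit : IsUnit N.det := by
    have h := (Matrix.isUnit_iff_isUnit_det _).mp hNC_pd.isUnit
    rw [Matrix.det_mul] at h
    exact isUnit_of_mul_isUnit_left h
  have hNi : N * N⁻¹ = 1 := Matrix.mul_nonsing_inv N hNunit
  have hiN : N⁻¹ * N = 1 := Matrix.nonsing_inv_mul N hNunit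
  have hNHunit : IsUnit Nᴴ.det := by rwa [Matrix.det_conjTranspose, isUnit_star]
  have hiNH : (Nᴴ)⁻¹ * Nᴴ = 1 := Matrix.nonsing_inv_mul Nᴴ hNHunit
  -- Key identity 1 : (L-1) * N⁻¹ = C⁻¹ - C⁻¹ * N⁻¹
  have e1 : C⁻¹ * N = C⁻¹ - 1 + L := by
    rw [hN, mul_add, mul_sub, mul_one, ← mul_assoc, hiC, one_mul]
  have key1 : (L - 1) * N⁻¹ = C⁻¹ - C⁻¹ * N⁻¹ := by
    have : C⁻¹ - (L - 1) * N⁻¹ = C⁻¹ * N⁻¹ := by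
      calc C⁻¹ - (L - 1) * N⁻¹ = (C⁻¹ * N) * N⁻¹ - (L - 1) * N⁻¹ := by
            rw [mul_assoc, hNi, mul_one]
      _ = (C⁻¹ * N - (L - 1)) * N⁻¹ := (sub_mul _ _ _).symm
      _ = C⁻¹ * N⁻¹ := by rw [e1, show C⁻¹ - 1 + L - (L - 1) = C⁻¹ by abel]
    rw [← this]; abel
  -- Key identity 2 : (L-1) * N⁻¹ = (N⁻¹)ᴴ * P * N⁻¹ - D⁻¹ , P := L + L * (C * D⁻¹) * L
  set P : Matrix (Fin n₂) (Fin n₂) ℂ := L + L * (C * D⁻¹) * L with hP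
  have hNH : Nᴴ = D + L * C := by
    rw [hN, hD]
    simp [Matrix.conjTranspose_add, Matrix.conjTranspose_sub, Matrix.conjTranspose_mul,
      hC.isHermitian.eq, hL.isHermitian.eq]
  have e2 : D⁻¹ * N = 1 + D⁻¹ * (C * L) := by
    rw [hN, ← hD, mul_add, hiD]
  have e4 : C * D⁻¹ * C = C * D⁻¹ - C := by
    have h1C : (1 : Matrix (Fin n₂) (Fin n₂) ℂ) - D = C := by rw [hD]; abel
    calc C * D⁻¹ * C = C * D⁻¹ * (1 - D) := by rw [h1C]
    _ = C * D⁻¹ - C * (D⁻¹ * D) := by rw [mul_sub, mul_one, mul_assoc]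
    _ = C * D⁻¹ - C := by rw [hiD, mul_one]
  have e3 : Nᴴ * (L + D⁻¹ * (C * L)) = P := by
    rw [hNH, hP]
    have expand : (D + L * C) * (L + D⁻¹ * (C * L))
        = D * L + (D * D⁻¹) * (C * L) + L * C * L + L * (C * D⁻¹ * C) * L := by
      noncomm_ring
    rw [expand, hDi, one_mul, e4]
    have hDL : D * L = L - C * L := by rw [hD, sub_mul, one_mul]
    rw [hDL]
    noncomm_ring
  have key2 : (L - 1) * N⁻¹ = (N⁻¹)ᴴ * P * N⁻¹ - D⁻¹ := by
    have lhs : D⁻¹ + (L - 1) * N⁻¹ = (L + D⁻¹ * (C * L)) * N⁻¹ := by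
      calc D⁻¹ + (L - 1) * N⁻¹ = (D⁻¹ * N) * N⁻¹ + (L - 1) * N⁻¹ := by
            rw [mul_assoc, hNi, mul_one]
      _ = (D⁻¹ * N + (L - 1)) * N⁻¹ := (add_mul _ _ _).symm
      _ = (L + D⁻¹ * (C * L)) * N⁻¹ := by
            rw [e2, show (1 : Matrix (Fin n₂) (Fin n₂) ℂ) + D⁻¹ * (C * L) + (L - 1)
              = L + D⁻¹ * (C * L) by abel]
    have rhs : (N⁻¹)ᴴ * P * N⁻¹ = (L + D⁻¹ * (C * L)) * N⁻¹ := by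
      rw [Matrix.conjTranspose_nonsing_inv, ← e3, ← mul_assoc, ← mul_assoc, hiNH, one_mul]
    rw [rhs, ← lhs]
    abel
  -- positive semidefiniteness of the correction terms
  have hP_psd : P.PosSemidef := by
    have hCDi : (C * D⁻¹).PosSemidef := by
      have heq : C * D⁻¹ = Sᴴ * D⁻¹ * S := by
        rw [hSH]
        calc C * D⁻¹ = (S * S) * D⁻¹ := by rw [hS2]
        _ = S * (D⁻¹ * S) := by rw [mul_assoc, hSDi]
        _ = S * D⁻¹ * S := by rw [mul_assoc]
      rw [heq]
      exact hC'.inv.posSemidef.conjTranspose_mul_mul_same S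
    have : (L * (C * D⁻¹) * L).PosSemidef := by
      have := hCDi.conjTranspose_mul_mul_same L
      rwa [hL.isHermitian.eq] at this
    exact hL.add this
  have hNCi_psd : (B * (C⁻¹ * N⁻¹) * Bᴴ).PosSemidef := by
    have : (C⁻¹ * N⁻¹).PosSemidef := by
      rw [← Matrix.mul_inv_rev]
      exact hNC_pd.inv.posSemidef
    exact this.mul_mul_conjTranspose_same B
  have hX_psd : (B * ((N⁻¹)ᴴ * P * N⁻¹) * Bᴴ).PosSemidef := by
    have := hP_psd.mul_mul_conjTranspose_same (B * (N⁻¹)ᴴ)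
    rwa [Matrix.conjTranspose_mul, Matrix.conjTranspose_conjTranspose,
      show B * (N⁻¹)ᴴ * P * (N⁻¹ * Bᴴ) = B * ((N⁻¹)ᴴ * P * N⁻¹) * Bᴴ by
        simp only [Matrix.mul_assoc]] at this
  constructor
  · have : Atilde = (A - B * C⁻¹ * Bᴴ) + B * (C⁻¹ * N⁻¹) * Bᴴ := by
      rw [hAt, Matrix.mul_assoc B (L - 1) N⁻¹, key1, Matrix.mul_sub, Matrix.sub_mul]
      abel
    rw [this]
    exact hB₁.add hNCi_psd
  · have : 1 - Atilde = ((1 - A) - B * D⁻¹ * Bᴴ) + B * ((N⁻¹)ᴴ * P * N⁻¹) * Bᴴ := by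
      rw [hAt, Matrix.mul_assoc B (L - 1) N⁻¹, key2, Matrix.mul_sub, Matrix.sub_mul]
      abel
    rw [this]
    exact hB₂.add hX_psd
end

section
/- Let C be a Hermitian positive definite n×n complex matrix, let 0 < ε ≤ 1, and let K be a Hermitian n×n complex matrix satisfying −(1 − ε) C⁻¹ ≤ K. Then both 1 + CK and 1 + KC are invertible. -/
open Matrix
open scoped ComplexOrder

/-- If `C` is Hermitian positive definite, `0 < ε ≤ 1`, and `K` is Hermitian with
`-(1 - ε) C⁻¹ ≤ K`, then `1 + C K` and `1 + K C` are invertible. -/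
theorem stmt_10 {n : ℕ}
    (C K : Matrix (Fin n) (Fin n) ℂ)
    (hC : C.PosDef) (ε : ℝ) (hε : 0 < ε) (hε' : ε ≤ 1)
    (hK : K.IsHermitian)
    (hKbound : (K - (-((1 - ε : ℝ) • C⁻¹))).PosSemidef) :
    IsUnit (1 + C * K) ∧ IsUnit (1 + K * C) := by
  set S := (open MatrixOrder in CFC.sqrt C) with hS
  have hSpsd : S.PosSemidef := by
    open MatrixOrder in exact Matrix.nonneg_iff_posSemidef.mp (CFC.sqrt_nonneg C)
  have hSS : S * S = C := by
    open MatrixOrder in exact CFC.sqrt_mul_sqrt_self C hC.posSemidef.nonneg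
  have hSherm : Sᴴ = S := hSpsd.1
  have hSunit : IsUnit S := by
    apply (Matrix.isUnit_iff_isUnit_det S).mpr
    have : IsUnit (S.det * S.det) := by
      rw [← Matrix.det_mul, hSS]
      exact (Matrix.isUnit_iff_isUnit_det C).mp hC.isUnit
    exact isUnit_of_mul_isUnit_left this
  have hSinv : S * S⁻¹ = 1 := Matrix.mul_nonsing_inv _ (Matrix.isUnit_iff_isUnit_det _ |>.mp hSunit)
  have hSinv' : S⁻¹ * S = 1 := Matrix.nonsing_inv_mul _ (Matrix.isUnit_iff_isUnit_det _ |>.mp hSunit)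
  -- S * C⁻¹ * S = 1
  have hSCinv : S * C⁻¹ * S = 1 := by
    rw [← hSS, Matrix.mul_inv_rev]
    rw [show S * (S⁻¹ * S⁻¹) * S = (S * S⁻¹) * (S⁻¹ * S) by noncomm_ring, hSinv, hSinv',
      Matrix.one_mul]
  -- conjugate the bound
  have hM : (K + (1 - ε : ℝ) • C⁻¹).PosSemidef := by
    simpa [sub_neg_eq_add] using hKbound
  have hconj : (S * (K + (1 - ε : ℝ) • C⁻¹) * S).PosSemidef := by
    simpa [hSherm] using hM.conjTranspose_mul_mul_same S
  have hexp : S * (K + (1 - ε : ℝ) • C⁻¹) * S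
      = S * K * S + (1 - ε : ℝ) • (1 : Matrix (Fin n) (Fin n) ℂ) := by
    rw [Matrix.mul_add, Matrix.add_mul, Matrix.mul_smul, Matrix.smul_mul, hSCinv]
  have hX : (S * K * S + (1 - ε : ℝ) • (1 : Matrix (Fin n) (Fin n) ℂ)).PosSemidef := by
    rw [← hexp]; exact hconj
  have hε1 : ((ε : ℝ) • (1 : Matrix (Fin n) (Fin n) ℂ)).PosDef := by
    have h1 : ((ε : ℝ) • (1 : Matrix (Fin n) (Fin n) ℂ))
        = Matrix.diagonal (fun _ => (ε : ℂ)) := by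
      ext i j
      by_cases h : i = j <;>
        simp [Matrix.one_apply, Matrix.diagonal, h, Complex.real_smul]
    rw [h1]
    exact Matrix.posDef_diagonal_iff.mpr fun i => by exact_mod_cast hε
  have hId : (1 : Matrix (Fin n) (Fin n) ℂ) + S * K * S
      = (S * K * S + (1 - ε : ℝ) • (1 : Matrix (Fin n) (Fin n) ℂ))
        + (ε : ℝ) • (1 : Matrix (Fin n) (Fin n) ℂ) := by
    have h2 : ((1 - ε) + ε : ℝ) = 1 := by ring
    rw [add_assoc, ← add_smul, h2, one_smul, add_comm]
  have hPD : ((1 : Matrix (Fin n) (Fin n) ℂ) + S * K * S).PosDef := by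
    rw [hId]; exact Matrix.PosDef.posSemidef_add hX hε1
  have hunit : IsUnit ((1 : Matrix (Fin n) (Fin n) ℂ) + S * K * S) := hPD.isUnit
  constructor
  · have : 1 + C * K = S * (1 + S * K * S) * S⁻¹ := by
      rw [Matrix.mul_add, Matrix.add_mul, Matrix.mul_one, hSinv, ← hSS]
      simp only [Matrix.mul_assoc, hSinv, Matrix.mul_one]
    rw [this]
    exact (hSunit.mul hunit).mul (Matrix.isUnit_nonsing_inv_iff.mpr hSunit)
  · have : 1 + K * C = S⁻¹ * (1 + S * K * S) * S := by
      rw [Matrix.mul_add, Matrix.add_mul, Matrix.mul_one, hSinv', ← hSS]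
      simp only [← Matrix.mul_assoc, hSinv', Matrix.one_mul]
    rw [this]
    exact ((Matrix.isUnit_nonsing_inv_iff.mpr hSunit).mul hunit).mul hSunit
end

section
/- Let C be a Hermitian n×n complex matrix such that both C and 1 − C are positive definite, let 0 < ε < 1, and let K be a Hermitian n×n complex matrix satisfying −(1 − ε) C⁻¹ ≤ K ≤ (1 − ε)(1 − C)⁻¹. Then 1 + CK is invertible, the matrix L := 1 − K(1 + CK)⁻¹ is Hermitian and positive semidefinite, the matrix 1 − C + CL is invertible, and (1 − L)(1 − C + CL)⁻¹ = K. -/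
open Matrix
open scoped ComplexOrder

section Aux

variable {n : ℕ}

lemma aux_smul_posSemidef {a : ℝ} (ha : 0 ≤ a) {M : Matrix (Fin n) (Fin n) ℂ}
    (hM : M.PosSemidef) : (a • M).PosSemidef := by
  refine ⟨?_, fun x => ?_⟩
  · have h1 : (a • M)ᴴ = a • Mᴴ := by
      ext i j
      simp [Matrix.conjTranspose_apply, Complex.real_smul, Complex.conj_ofReal]
    show (a • M)ᴴ = a • M
    rw [h1, hM.1]
  · exact (hM.smul ha).2 x

lemma aux_smul_posDef {a : ℝ} (ha : 0 < a) {M : Matrix (Fin n) (Fin n) ℂ}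
    (hM : M.PosDef) : (a • M).PosDef := by
  refine ⟨(aux_smul_posSemidef ha.le hM.posSemidef).1, fun x hx => ?_⟩
  exact (hM.smul ha).2 hx

open scoped MatrixOrder in
/-- Antitonicity of matrix inverse on positive definite matrices. -/
lemma aux_inv_anti {A B : Matrix (Fin n) (Fin n) ℂ} (hA : A.PosDef) (hB : B.PosDef)
    (h : (B - A).PosSemidef) : (A⁻¹ - B⁻¹).PosSemidef := by
  set S := CFC.sqrt (B - A) with hSdef
  have hS : (B - A).PosSemidef := h
  have hSps : S.PosSemidef := (CFC.sqrt_nonneg _).posSemidef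
  have hSH : Sᴴ = S := hSps.1
  have hSS : S * S = B - A := CFC.sqrt_mul_sqrt_self _ h.nonneg
  have hAiH : (A⁻¹)ᴴ = A⁻¹ := hA.isHermitian.inv
  have hAdet : IsUnit A.det := (Matrix.isUnit_iff_isUnit_det _).mp hA.isUnit
  have h1 : A * A⁻¹ = 1 := Matrix.mul_nonsing_inv _ hAdet
  -- W := 1 + S A⁻¹ S is positive definite
  have hX : (S * A⁻¹ * S).PosSemidef := by
    have := hA.inv.posSemidef.mul_mul_conjTranspose_same S
    rwa [hSH] at this
  have hW : (1 + S * A⁻¹ * S).PosDef := Matrix.PosDef.add_posSemidef Matrix.PosDef.one hX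
  set W := 1 + S * A⁻¹ * S with hWdef
  have hWdet : IsUnit W.det := (Matrix.isUnit_iff_isUnit_det _).mp hW.isUnit
  have h2 : W * W⁻¹ = 1 := Matrix.mul_nonsing_inv _ hWdet
  have hWc : S * W⁻¹ + S * (S * A⁻¹ * S) * W⁻¹ = S := by
    calc S * W⁻¹ + S * (S * A⁻¹ * S) * W⁻¹ = S * ((1 + S * A⁻¹ * S) * W⁻¹) := by noncomm_ring
    _ = S := by rw [← hWdef, h2, Matrix.mul_one]
  have key : (A + S * S) * (A⁻¹ - A⁻¹ * (S * W⁻¹) * (S * A⁻¹)) = 1 := by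
    calc (A + S * S) * (A⁻¹ - A⁻¹ * (S * W⁻¹) * (S * A⁻¹))
        = (A * A⁻¹) + S * S * A⁻¹ - (A * A⁻¹) * (S * W⁻¹) * (S * A⁻¹)
            - S * (S * A⁻¹ * S) * W⁻¹ * (S * A⁻¹) := by noncomm_ring
      _ = 1 + S * S * A⁻¹ - (S * W⁻¹ + S * (S * A⁻¹ * S) * W⁻¹) * (S * A⁻¹) := by
            rw [h1]; noncomm_ring
      _ = 1 + S * S * A⁻¹ - S * (S * A⁻¹) := by rw [hWc]
      _ = 1 := by noncomm_ring
  have hBeq : B = A + S * S := by rw [hSS]; abel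
  have hBinv : B⁻¹ = A⁻¹ - A⁻¹ * (S * W⁻¹) * (S * A⁻¹) := by
    rw [hBeq]; exact Matrix.inv_eq_right_inv key
  have heq : A⁻¹ - B⁻¹ = (A⁻¹ * S) * W⁻¹ * (A⁻¹ * S)ᴴ := by
    rw [hBinv, Matrix.conjTranspose_mul, hSH, hAiH]
    noncomm_ring
  rw [heq]
  exact hW.inv.posSemidef.mul_mul_conjTranspose_same _

end Aux

/-- If `C`, `1 - C` are positive definite, `0 < ε < 1`, and `K` is Hermitian with
`-(1 - ε) C⁻¹ ≤ K ≤ (1 - ε)(1 - C)⁻¹`, then `1 + C K` is invertible,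
`L = 1 - K (1 + C K)⁻¹` is (Hermitian) positive semidefinite, `1 - C + C L` is invertible
and `(1 - L)(1 - C + C L)⁻¹ = K`. -/
theorem stmt_11 {n : ℕ}
    (C K : Matrix (Fin n) (Fin n) ℂ)
    (hC : C.PosDef) (hC' : (1 - C).PosDef)
    (ε : ℝ) (hε : 0 < ε) (hε' : ε < 1)
    (hK : K.IsHermitian)
    (hKlow : (K - (-((1 - ε : ℝ) • C⁻¹))).PosSemidef)
    (hKup : (((1 - ε : ℝ) • (1 - C)⁻¹) - K).PosSemidef)
    (L : Matrix (Fin n) (Fin n) ℂ)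
    (hL : L = 1 - K * (1 + C * K)⁻¹) :
    IsUnit (1 + C * K) ∧ L.PosSemidef ∧ IsUnit (1 - C + C * L) ∧
      (1 - L) * (1 - C + C * L)⁻¹ = K := by
  have hCdet : IsUnit C.det := (Matrix.isUnit_iff_isUnit_det _).mp hC.isUnit
  have hC'det : IsUnit (1 - C).det := (Matrix.isUnit_iff_isUnit_det _).mp hC'.isUnit
  have hCC : C * C⁻¹ = 1 := Matrix.mul_nonsing_inv _ hCdet
  have hCC' : C⁻¹ * C = 1 := Matrix.nonsing_inv_mul _ hCdet
  have hDD : (1 - C) * (1 - C)⁻¹ = 1 := Matrix.mul_nonsing_inv _ hC'det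
  have hDD' : (1 - C)⁻¹ * (1 - C) = 1 := Matrix.nonsing_inv_mul _ hC'det
  -- M = C⁻¹ + K is positive definite
  set M := C⁻¹ + K with hMdef
  have hlow : (K + (1 - ε : ℝ) • C⁻¹).PosSemidef := by
    have := hKlow; rwa [sub_neg_eq_add] at this
  have hεC : ((ε : ℝ) • C⁻¹).PosDef := aux_smul_posDef hε hC.inv
  have hMeq : M = (K + (1 - ε : ℝ) • C⁻¹) + (ε : ℝ) • C⁻¹ := by
    rw [hMdef]; module
  have hM : M.PosDef := by
    rw [hMeq]; exact Matrix.PosDef.posSemidef_add hlow hεC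
  have hMdet : IsUnit M.det := (Matrix.isUnit_iff_isUnit_det _).mp hM.isUnit
  have hMM : M * M⁻¹ = 1 := Matrix.mul_nonsing_inv _ hMdet
  have hMM' : M⁻¹ * M = 1 := Matrix.nonsing_inv_mul _ hMdet
  -- 1 + C K = C M
  have hCM : 1 + C * K = C * M := by rw [hMdef, Matrix.mul_add, hCC]
  have hUnit1 : IsUnit (1 + C * K) := by rw [hCM]; exact hC.isUnit.mul hM.isUnit
  -- (1 + C K)⁻¹ = M⁻¹ C⁻¹
  have hinv1 : (1 + C * K)⁻¹ = M⁻¹ * C⁻¹ := by rw [hCM, Matrix.mul_inv_rev]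
  -- L = C⁻¹ M⁻¹ C⁻¹ - (C⁻¹ - 1)
  have hLeq : L = C⁻¹ * M⁻¹ * C⁻¹ - (C⁻¹ - 1) := by
    rw [hL, hinv1]
    have hKM : K = M - C⁻¹ := by rw [hMdef]; abel
    rw [hKM]
    calc 1 - (M - C⁻¹) * (M⁻¹ * C⁻¹)
        = 1 - (M * M⁻¹) * C⁻¹ + C⁻¹ * M⁻¹ * C⁻¹ := by noncomm_ring
      _ = 1 - C⁻¹ + C⁻¹ * M⁻¹ * C⁻¹ := by rw [hMM, Matrix.one_mul]
      _ = C⁻¹ * M⁻¹ * C⁻¹ - (C⁻¹ - 1) := by abel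
  -- B = C⁻¹ + (1-C)⁻¹ is PD, M ≤ B
  set B := C⁻¹ + (1 - C)⁻¹ with hBdef
  have hB : B.PosDef := hC.inv.add hC'.inv
  have hBMdiff : B - M = (((1 - ε : ℝ) • (1 - C)⁻¹ - K) + (ε : ℝ) • (1 - C)⁻¹) := by
    rw [hBdef, hMdef]; module
  have hBM : (B - M).PosSemidef := by
    rw [hBMdiff]
    exact hKup.add (aux_smul_posDef hε hC'.inv).posSemidef
  have hanti : (M⁻¹ - B⁻¹).PosSemidef := aux_inv_anti hM hB hBM
  -- B⁻¹ = (1 - C) * C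
  have hBinv : B⁻¹ = (1 - C) * C := by
    apply Matrix.inv_eq_right_inv
    rw [hBdef]
    have hcomm : (1 - C) * C = C * (1 - C) := by noncomm_ring
    calc (C⁻¹ + (1 - C)⁻¹) * ((1 - C) * C)
        = C⁻¹ * (C * (1 - C)) + (1 - C)⁻¹ * (1 - C) * C := by rw [hcomm]; noncomm_ring
      _ = (C⁻¹ * C) * (1 - C) + (1 - C)⁻¹ * (1 - C) * C := by noncomm_ring
      _ = 1 := by rw [hCC', hDD']; noncomm_ring
  -- conjugate by C⁻¹
  have hLps : L.PosSemidef := by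
    have hconj : (C⁻¹ * (M⁻¹ - B⁻¹) * (C⁻¹)ᴴ).PosSemidef :=
      hanti.mul_mul_conjTranspose_same C⁻¹
    rw [hC.isHermitian.inv] at hconj
    have : C⁻¹ * (M⁻¹ - B⁻¹) * C⁻¹ = L := by
      rw [hBinv, hLeq]
      have : C⁻¹ * ((1 - C) * C) * C⁻¹ = C⁻¹ - 1 := by
        calc C⁻¹ * ((1 - C) * C) * C⁻¹ = C⁻¹ * (1 - C) * (C * C⁻¹) := by noncomm_ring
          _ = C⁻¹ * (1 - C) := by rw [hCC, Matrix.mul_one]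
          _ = C⁻¹ - C⁻¹ * C := by noncomm_ring
          _ = C⁻¹ - 1 := by rw [hCC']
      calc C⁻¹ * (M⁻¹ - (1 - C) * C) * C⁻¹
          = C⁻¹ * M⁻¹ * C⁻¹ - C⁻¹ * ((1 - C) * C) * C⁻¹ := by noncomm_ring
        _ = C⁻¹ * M⁻¹ * C⁻¹ - (C⁻¹ - 1) := by rw [this]
    rwa [this] at hconj
  -- 1 - C + C L = M⁻¹ C⁻¹
  have hfac : 1 - C + C * L = M⁻¹ * C⁻¹ := by
    rw [hLeq]
    calc 1 - C + C * (C⁻¹ * M⁻¹ * C⁻¹ - (C⁻¹ - 1))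
        = 1 - (C * C⁻¹) + (C * C⁻¹) * (M⁻¹ * C⁻¹) := by noncomm_ring
      _ = M⁻¹ * C⁻¹ := by rw [hCC]; noncomm_ring
  have hUnit2 : IsUnit (1 - C + C * L) := by
    rw [hfac]
    exact hM.inv.isUnit.mul hC.inv.isUnit
  have hinv2 : (1 - C + C * L)⁻¹ = C * M := by
    rw [hfac, Matrix.mul_inv_rev, Matrix.nonsing_inv_nonsing_inv _ hCdet,
      Matrix.nonsing_inv_nonsing_inv _ hMdet]
  have hfinal : (1 - L) * (1 - C + C * L)⁻¹ = K := by
    rw [hinv2, hLeq]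
    calc (1 - (C⁻¹ * M⁻¹ * C⁻¹ - (C⁻¹ - 1))) * (C * M)
        = (C⁻¹ * C) * M - C⁻¹ * M⁻¹ * ((C⁻¹ * C) * M) := by noncomm_ring
      _ = M - C⁻¹ * (M⁻¹ * M) := by rw [hCC']; noncomm_ring
      _ = M - C⁻¹ := by rw [hMM', Matrix.mul_one]
      _ = K := by rw [hMdef]; abel
  exact ⟨hUnit1, hLps, hUnit2, hfinal⟩
end

section
/- Let R be an m×n complex matrix and S a Hermitian n×n complex matrix. Then the set { Rᴴ T R + S : T a Hermitian m×m complex matrix with 0 ≤ T ≤ 1 } is equal to the order interval { X : X Hermitian n×n and S ≤ X ≤ S + Rᴴ R }. -/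
open Matrix
open scoped ComplexOrder

namespace Stmt13Aux

open scoped MatrixOrder

lemma psd_neg_eq_zero {n : ℕ} {N : Matrix (Fin n) (Fin n) ℂ}
    (h1 : N.PosSemidef) (h2 : (-N).PosSemidef) : N = 0 := by
  have hz : ∀ x : Fin n → ℂ, N *ᵥ x = 0 := by
    intro x
    have ha := h1.dotProduct_mulVec_nonneg x
    have hb := h2.dotProduct_mulVec_nonneg x
    rw [neg_mulVec, dotProduct_neg, le_neg, neg_zero] at hb
    exact (h1.dotProduct_mulVec_zero_iff x).mp (le_antisymm hb ha)
  ext i j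
  have := congrFun (hz (Pi.single j 1)) i
  simpa [mulVec_single] using this

lemma reverse {m n : ℕ} (R : Matrix (Fin m) (Fin n) ℂ) (A : Matrix (Fin n) (Fin n) ℂ)
    (hA : A.PosSemidef) (hBA : (Rᴴ * R - A).PosSemidef) :
    ∃ T : Matrix (Fin m) (Fin m) ℂ,
      T.PosSemidef ∧ (1 - T).PosSemidef ∧ Rᴴ * T * R = A := by
  obtain ⟨B, hBdef⟩ : ∃ B' : Matrix (Fin n) (Fin n) ℂ, B' = Rᴴ * R := ⟨_, rfl⟩
  rw [← hBdef] at hBA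
  have hB : B.PosSemidef := by rw [hBdef]; exact posSemidef_conjTranspose_mul_self R
  have h : B.IsHermitian := hB.1
  obtain ⟨U, hUdef⟩ : ∃ U' : Matrix (Fin n) (Fin n) ℂ,
      U' = (h.eigenvectorUnitary : Matrix (Fin n) (Fin n) ℂ) := ⟨_, rfl⟩
  obtain ⟨e, hedef⟩ : ∃ e' : Fin n → ℝ, e' = h.eigenvalues := ⟨_, rfl⟩
  have hUU : Uᴴ * U = 1 := by
    simpa [hUdef, star_eq_conjTranspose] using
      Matrix.mem_unitaryGroup_iff'.mp h.eigenvectorUnitary.2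
  have key : ∀ a b : Fin n → ℝ,
      (U * diagonal ((↑) ∘ a) * Uᴴ) * (U * diagonal ((↑) ∘ b) * Uᴴ)
        = U * diagonal ((↑) ∘ (a * b)) * Uᴴ := by
    intro a b
    have hfun : ((↑) ∘ (a * b) : Fin n → ℂ) = ((↑) ∘ a) * ((↑) ∘ b) := by
      funext i
      simp [Function.comp, Complex.ofReal_mul]
    calc (U * diagonal ((↑) ∘ a) * Uᴴ) * (U * diagonal ((↑) ∘ b) * Uᴴ)
        = U * diagonal ((↑) ∘ a) * (Uᴴ * U) * (diagonal ((↑) ∘ b) * Uᴴ) := by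
          simp only [Matrix.mul_assoc]
      _ = U * (diagonal ((↑) ∘ a) * diagonal ((↑) ∘ b)) * Uᴴ := by
          rw [hUU]; simp only [Matrix.mul_one, Matrix.mul_assoc]
      _ = U * diagonal ((↑) ∘ (a * b)) * Uᴴ := by rw [diagonal_mul_diagonal, hfun]; rfl
  have herm : ∀ a : Fin n → ℝ,
      (U * diagonal ((↑) ∘ a) * Uᴴ)ᴴ = U * diagonal ((↑) ∘ a) * Uᴴ := by
    intro a
    have hs : star ((↑) ∘ a : Fin n → ℂ) = (↑) ∘ a := by
      funext i
      simp [Function.comp, Complex.star_def, Complex.conj_ofReal]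
    rw [conjTranspose_mul, conjTranspose_mul, diagonal_conjTranspose, hs,
      conjTranspose_conjTranspose, Matrix.mul_assoc]
  have hBspec : B = U * diagonal ((↑) ∘ e) * Uᴴ := by
    simpa [hUdef, hedef, star_eq_conjTranspose] using h.spectral_theorem
  -- the pseudoinverse and the range projection
  obtain ⟨g, hgdef⟩ : ∃ g' : Fin n → ℝ, g' = fun i => if e i = 0 then 0 else (e i)⁻¹ :=
    ⟨_, rfl⟩
  obtain ⟨p, hpdef⟩ : ∃ p' : Fin n → ℝ, p' = fun i => if e i = 0 then 0 else 1 := ⟨_, rfl⟩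
  obtain ⟨pinv, hpinvdef⟩ : ∃ q : Matrix (Fin n) (Fin n) ℂ,
      q = U * diagonal ((↑) ∘ g) * Uᴴ := ⟨_, rfl⟩
  obtain ⟨P, hPdef⟩ : ∃ q : Matrix (Fin n) (Fin n) ℂ,
      q = U * diagonal ((↑) ∘ p) * Uᴴ := ⟨_, rfl⟩
  have hpe : p * e = e := by
    funext i; by_cases hi : e i = 0 <;> simp [hpdef, hi]
  have hep : e * p = e := by
    funext i; by_cases hi : e i = 0 <;> simp [hpdef, hi, mul_comm]
  have hge : g * e = p := by
    funext i; by_cases hi : e i = 0 <;> simp [hgdef, hpdef, hi, inv_mul_cancel₀]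
  have heg : e * g = p := by
    funext i; by_cases hi : e i = 0 <;> simp [hgdef, hpdef, hi, mul_inv_cancel₀]
  have hpg : p * g = g := by
    funext i; by_cases hi : e i = 0 <;> simp [hgdef, hpdef, hi]
  have hPB : P * B = B := by rw [hBspec, hPdef, key, hpe]
  have hpB : pinv * B = P := by rw [hBspec, hpinvdef, key, hge, ← hPdef]
  have hBp : B * pinv = P := by rw [hBspec, hpinvdef, key, heg, ← hPdef]
  have hPp : P * pinv = pinv := by
    conv_lhs => rw [hPdef, hpinvdef, key, hpg]
    rw [← hpinvdef]
  have hpBp : pinv * B * pinv = pinv := by rw [hpB, hPp]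
  have hPH : Pᴴ = P := by
    have := herm p
    rwa [← hPdef] at this
  have hpH : pinvᴴ = pinv := by
    have := herm g
    rwa [← hpinvdef] at this
  have h1PB : (1 - P) * B = 0 := by rw [Matrix.sub_mul, Matrix.one_mul, hPB, sub_self]
  -- the projection P kills nothing in the range of Rᴴ : R * P = R
  have hRP : R * P = R := by
    have hexp : (R * P - R)ᴴ * (R * P - R) = (P - 1) * B * (P - 1) := by
      rw [conjTranspose_sub, conjTranspose_mul, hPH, hBdef]
      simp only [Matrix.sub_mul, Matrix.mul_sub, Matrix.one_mul, Matrix.mul_one, Matrix.mul_assoc]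
    have hPB0 : (P - 1) * B = 0 := by rw [Matrix.sub_mul, Matrix.one_mul, hPB, sub_self]
    have h0 : (R * P - R)ᴴ * (R * P - R) = 0 := by rw [hexp, hPB0, Matrix.zero_mul]
    exact sub_eq_zero.mp (conjTranspose_mul_self_eq_zero.mp h0)
  -- (1 - P) * A * (1 - P) = 0
  have h1PH : (1 - P)ᴴ = 1 - P := by rw [conjTranspose_sub, conjTranspose_one, hPH]
  have hN0 : (1 - P) * A * (1 - P) = 0 := by
    apply psd_neg_eq_zero
    · have := hA.conjTranspose_mul_mul_same (1 - P)
      rwa [h1PH] at this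
    · have hpsd := hBA.conjTranspose_mul_mul_same (1 - P)
      rw [h1PH] at hpsd
      have heq : (1 - P) * (B - A) * (1 - P) = -((1 - P) * A * (1 - P)) := by
        have : (1 - P) * (B - A) * (1 - P)
            = ((1 - P) * B) * (1 - P) - (1 - P) * A * (1 - P) := by
          simp only [Matrix.mul_sub, Matrix.sub_mul, Matrix.one_mul, Matrix.mul_one]
          abel
        rw [this, h1PB, Matrix.zero_mul, zero_sub]
      rwa [heq] at hpsd
  -- hence A * P = A and P * A = A
  have hC1P : (CFC.sqrt A) * (1 - P) = 0 := by
    have h0 : ((CFC.sqrt A) * (1 - P))ᴴ * ((CFC.sqrt A) * (1 - P)) = 0 := by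
      rw [conjTranspose_mul, h1PH, (CFC.sqrt_nonneg A).posSemidef.1.eq]
      calc (1 - P) * (CFC.sqrt A) * ((CFC.sqrt A) * (1 - P))
          = (1 - P) * ((CFC.sqrt A) * (CFC.sqrt A)) * (1 - P) := by simp only [Matrix.mul_assoc]
        _ = 0 := by rw [(CFC.sqrt_mul_sqrt_self A hA.nonneg), hN0]
    exact conjTranspose_mul_self_eq_zero.mp h0
  have hCP : (CFC.sqrt A) * P = (CFC.sqrt A) := by
    have := hC1P
    rw [Matrix.mul_sub, Matrix.mul_one, sub_eq_zero] at this
    exact this.symm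
  have hAP : A * P = A := by
    conv_lhs => rw [← (CFC.sqrt_mul_sqrt_self A hA.nonneg)]
    rw [Matrix.mul_assoc, hCP, (CFC.sqrt_mul_sqrt_self A hA.nonneg)]
  have hPA : P * A = A := by
    have := congrArg conjTranspose hAP
    rwa [conjTranspose_mul, hPH, hA.1.eq] at this
  -- the candidate T
  refine ⟨R * pinv * A * pinv * Rᴴ, ?_, ?_, ?_⟩
  · have hpsd := hA.conjTranspose_mul_mul_same (pinv * Rᴴ)
    have hM : (pinv * Rᴴ)ᴴ = R * pinv := by
      rw [conjTranspose_mul, hpH, conjTranspose_conjTranspose]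
    rw [hM] at hpsd
    have : R * pinv * A * (pinv * Rᴴ) = R * pinv * A * pinv * Rᴴ := by
      simp only [Matrix.mul_assoc]
    rwa [this] at hpsd
  · -- 1 - T is PSD
    have hM : (pinv * Rᴴ)ᴴ = R * pinv := by
      rw [conjTranspose_mul, hpH, conjTranspose_conjTranspose]
    have hQeq : R * pinv * B * pinv * Rᴴ = R * pinv * Rᴴ := by
      calc R * pinv * B * pinv * Rᴴ = R * (pinv * B * pinv) * Rᴴ := by
            simp only [Matrix.mul_assoc]
        _ = R * pinv * Rᴴ := by rw [hpBp, Matrix.mul_assoc]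
    have hQT : (R * pinv * Rᴴ - R * pinv * A * pinv * Rᴴ).PosSemidef := by
      have hpsd := hBA.conjTranspose_mul_mul_same (pinv * Rᴴ)
      rw [hM] at hpsd
      have : R * pinv * (B - A) * (pinv * Rᴴ)
          = R * pinv * Rᴴ - R * pinv * A * pinv * Rᴴ := by
        have hx : R * pinv * (B - A) * (pinv * Rᴴ)
            = R * pinv * B * pinv * Rᴴ - R * pinv * A * pinv * Rᴴ := by
          simp only [Matrix.mul_sub, Matrix.sub_mul, Matrix.mul_assoc]
        rw [hx, hQeq]
      rwa [this] at hpsd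
    have hQH : (R * pinv * Rᴴ)ᴴ = R * pinv * Rᴴ := by
      rw [conjTranspose_mul, conjTranspose_mul, hpH, conjTranspose_conjTranspose, Matrix.mul_assoc]
    have hQQ : (R * pinv * Rᴴ) * (R * pinv * Rᴴ) = R * pinv * Rᴴ := by
      calc (R * pinv * Rᴴ) * (R * pinv * Rᴴ)
          = R * pinv * (Rᴴ * R) * pinv * Rᴴ := by simp only [Matrix.mul_assoc]
        _ = R * pinv * B * pinv * Rᴴ := by rw [← hBdef]
        _ = R * pinv * Rᴴ := hQeq
    have h1Q : (1 - R * pinv * Rᴴ).PosSemidef := by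
      have hsq : (1 - R * pinv * Rᴴ)ᴴ * (1 - R * pinv * Rᴴ) = 1 - R * pinv * Rᴴ := by
        rw [conjTranspose_sub, conjTranspose_one, hQH]
        calc (1 - R * pinv * Rᴴ) * (1 - R * pinv * Rᴴ)
            = 1 - R * pinv * Rᴴ - R * pinv * Rᴴ
              + (R * pinv * Rᴴ) * (R * pinv * Rᴴ) := by
              simp only [Matrix.mul_sub, Matrix.sub_mul, Matrix.one_mul, Matrix.mul_one]; abel
          _ = 1 - R * pinv * Rᴴ := by rw [hQQ]; abel
      exact hsq ▸ posSemidef_conjTranspose_mul_self (1 - R * pinv * Rᴴ)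
    have hsplit : 1 - R * pinv * A * pinv * Rᴴ
        = (1 - R * pinv * Rᴴ) + (R * pinv * Rᴴ - R * pinv * A * pinv * Rᴴ) := by abel
    rw [hsplit]
    exact h1Q.add hQT
  · -- Rᴴ * T * R = A
    calc Rᴴ * (R * pinv * A * pinv * Rᴴ) * R
        = (Rᴴ * R) * pinv * A * (pinv * (Rᴴ * R)) := by simp only [Matrix.mul_assoc]
      _ = B * pinv * A * (pinv * B) := by rw [← hBdef]
      _ = P * A * P := by rw [hBp, hpB]
      _ = A := by rw [hPA, hAP]

end Stmt13Aux

/-- For `R` an `m × n` matrix and `S` Hermitian, the set `{ Rᴴ T R + S : 0 ≤ T ≤ 1 }`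
equals the order interval `{ X Hermitian : S ≤ X ≤ S + Rᴴ R }`. -/
theorem stmt_13 {m n : ℕ}
    (R : Matrix (Fin m) (Fin n) ℂ) (S : Matrix (Fin n) (Fin n) ℂ)
    (hS : S.IsHermitian) :
    {X : Matrix (Fin n) (Fin n) ℂ |
        ∃ T : Matrix (Fin m) (Fin m) ℂ,
          T.PosSemidef ∧ (1 - T).PosSemidef ∧ X = Rᴴ * T * R + S}
      = {X : Matrix (Fin n) (Fin n) ℂ |
          X.IsHermitian ∧ (X - S).PosSemidef ∧ ((S + Rᴴ * R) - X).PosSemidef} := by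
  ext X
  simp only [Set.mem_setOf_eq]
  constructor
  · rintro ⟨T, hT, h1T, rfl⟩
    refine ⟨(isHermitian_conjTranspose_mul_mul R hT.1).add hS, ?_, ?_⟩
    · have hx : Rᴴ * T * R + S - S = Rᴴ * T * R := by abel
      rw [hx]
      exact hT.conjTranspose_mul_mul_same R
    · have hx : S + Rᴴ * R - (Rᴴ * T * R + S) = Rᴴ * (1 - T) * R := by
        rw [Matrix.mul_sub, Matrix.sub_mul, Matrix.mul_one]
        abel
      rw [hx]
      exact h1T.conjTranspose_mul_mul_same R
  · rintro ⟨hXh, h1, h2⟩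
    have h2' : (Rᴴ * R - (X - S)).PosSemidef := by
      have heq : S + Rᴴ * R - X = Rᴴ * R - (X - S) := by abel
      rwa [heq] at h2
    obtain ⟨T, hT, h1T, hEq⟩ := Stmt13Aux.reverse R (X - S) h1 h2'
    exact ⟨T, hT, h1T, by rw [hEq]; abel⟩
end
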